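/- arXiv:1608.02881 — 7 statements merged into one kernel-verified Lean document; each statement's English description precedes it below -/
import Mathlib

section
/- The undirected torus expansion conjecture of Linial–London is false: for every constant c > 0 there exists a measurable set A ⊆ 𝕋² = ℝ²/ℤ² with 0 < m(A) ≤ c such that m(A ∪ σ₁(A) ∪ σ₂(A) ∪ σ₁⁻¹(A) ∪ σ₂⁻¹(A)) < 2·m(A), where m denotes the Haar (Lebesgue) probability measure on 𝕋². -/
open MeasureTheory

/-- The torus `𝕋² = ℝ²/ℤ²`, modeled as a product of two unit circles. -/
abbrev Torus : Type := AddCircle (1 : ℝ) × AddCircle (1 : ℝ)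

/-- The natural projection `π : ℝ² → 𝕋²`. -/
noncomputable def torusProj (p : ℝ × ℝ) : Torus :=
  ((p.1 : AddCircle (1 : ℝ)), (p.2 : AddCircle (1 : ℝ)))

/-- Action of `σ₁ = [[1,1],[0,1]]` on the torus, induced by its linear action on `ℝ²`. -/
noncomputable def sigma1 (p : Torus) : Torus := (p.1 + p.2, p.2)

/-- Action of `σ₂ = [[1,0],[1,1]]` on the torus. -/
noncomputable def sigma2 (p : Torus) : Torus := (p.1, p.1 + p.2)

/-- Action of `σ₁⁻¹ = [[1,-1],[0,1]]` on the torus. -/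
noncomputable def sigma1inv (p : Torus) : Torus := (p.1 - p.2, p.2)

/-- Action of `σ₂⁻¹ = [[1,0],[-1,1]]` on the torus. -/
noncomputable def sigma2inv (p : Torus) : Torus := (p.1, p.2 - p.1)

/-- The undirected torus expansion conjecture of Linial–London is false. -/
theorem undirected_torus_expansion_conjecture_false :
    ∀ c : ℝ, 0 < c →
      ∃ A : Set Torus, MeasurableSet A ∧ 0 < volume A ∧ volume A ≤ ENNReal.ofReal c ∧
        volume (A ∪ sigma1 '' A ∪ sigma2 '' A ∪ sigma1inv '' A ∪ sigma2inv '' A)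
          < 2 * volume A := by
  intro c hc
  set ε : ℝ := min c 1 / 2 with hε_def
  have hε0 : 0 < ε := by positivity
  have hε1 : ε ≤ 1 / 2 := by
    have : min c 1 ≤ 1 := min_le_right _ _
    simp only [hε_def]; linarith
  have h2εc : 2 * ε ≤ c := by
    have : min c 1 ≤ c := min_le_left _ _
    simp only [hε_def]; linarith
  -- the interval J on the circle
  set J : Set (AddCircle (1 : ℝ)) := Metric.closedBall 0 (ε / 2) with hJ_def
  have hJmeas : MeasurableSet J := Metric.isClosed_closedBall.measurableSet
  have hJvol : volume J = ENNReal.ofReal ε := by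
    rw [hJ_def, AddCircle.volume_closedBall]
    congr 1
    rw [min_eq_right (by linarith)]
    ring
  have hJneg : ∀ x : AddCircle (1 : ℝ), x ∈ J → -x ∈ J := by
    intro x hx
    simpa [hJ_def, mem_closedBall_zero_iff] using hx
  -- the four strips
  set H : Set Torus := {p | p.2 ∈ J} with hH_def
  set V : Set Torus := {p | p.1 ∈ J} with hV_def
  set D₁ : Set Torus := {p | p.1 - p.2 ∈ J} with hD₁_def
  set D₂ : Set Torus := {p | p.1 + p.2 ∈ J} with hD₂_def
  have hHmeas : MeasurableSet H := measurable_snd hJmeas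
  have hVmeas : MeasurableSet V := measurable_fst hJmeas
  set A : Set Torus := H ∪ V with hA_def
  have hAmeas : MeasurableSet A := hHmeas.union hVmeas
  -- measures of the pieces
  have hprod : ∀ (S T : Set (AddCircle (1 : ℝ))), MeasurableSet S → MeasurableSet T →
      volume (S ×ˢ T) = volume S * volume T := by
    intro S T hS hT
    rw [Measure.volume_eq_prod, Measure.prod_prod]
  have hHvol : volume H = ENNReal.ofReal ε := by
    have : H = (Set.univ : Set (AddCircle (1:ℝ))) ×ˢ J := by
      ext p; simp [hH_def, Set.mem_prod]
    rw [this, hprod _ _ MeasurableSet.univ hJmeas, AddCircle.measure_univ]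
    simp [hJvol]
  have hJcvol : volume Jᶜ = ENNReal.ofReal (1 - ε) := by
    have h := measure_compl hJmeas (measure_ne_top volume J)
    rw [hJvol, AddCircle.measure_univ] at h
    rw [h, ← ENNReal.ofReal_sub _ hε0.le]
  have hVHvol : volume (V \ H) = ENNReal.ofReal (ε * (1 - ε)) := by
    have : V \ H = J ×ˢ Jᶜ := by
      ext p; simp [hV_def, hH_def, Set.mem_prod]
    rw [this, hprod _ _ hJmeas hJmeas.compl, hJvol, hJcvol,
      ENNReal.ofReal_mul hε0.le]
  have hJJc : MeasurableSet (J ×ˢ Jᶜ : Set Torus) := hJmeas.prod hJmeas.compl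
  have hJJcvol : volume (J ×ˢ Jᶜ : Set Torus) = ENNReal.ofReal (ε * (1 - ε)) := by
    rw [hprod _ _ hJmeas hJmeas.compl, hJvol, hJcvol, ENNReal.ofReal_mul hε0.le]
  have hD₁Hvol : volume (D₁ \ H) = ENNReal.ofReal (ε * (1 - ε)) := by
    have heq : D₁ \ H = (fun p : Torus => (p.1 - p.2, p.2)) ⁻¹' (J ×ˢ Jᶜ) := by
      ext p; simp [hD₁_def, hH_def, Set.mem_prod]
    rw [heq, Measure.volume_eq_prod,
      (measurePreserving_sub_prod volume volume).measure_preimage hJJc.nullMeasurableSet,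
      ← Measure.volume_eq_prod]
    exact hJJcvol
  have hD₂Hvol : volume (D₂ \ H) = ENNReal.ofReal (ε * (1 - ε)) := by
    have heq : D₂ \ H = (fun p : Torus => (p.1 + p.2, p.2)) ⁻¹' (J ×ˢ Jᶜ) := by
      ext p; simp [hD₂_def, hH_def, Set.mem_prod]
    rw [heq, Measure.volume_eq_prod,
      (measurePreserving_add_prod volume volume).measure_preimage hJJc.nullMeasurableSet,
      ← Measure.volume_eq_prod]
    exact hJJcvol
  have hAvol : volume A = ENNReal.ofReal ε + ENNReal.ofReal (ε * (1 - ε)) := by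
    have : A = H ∪ (V \ H) := by
      rw [hA_def, Set.union_diff_self]
    rw [this, measure_union (Set.disjoint_sdiff_right.mono_left le_rfl)
      (hVmeas.diff hHmeas), hHvol, hVHvol]
  -- the union of A and its images is contained in the four strips
  have hUsub : A ∪ sigma1 '' A ∪ sigma2 '' A ∪ sigma1inv '' A ∪ sigma2inv '' A ⊆
      H ∪ (V \ H) ∪ (D₁ \ H) ∪ (D₂ \ H) := by
    have key : A ∪ sigma1 '' A ∪ sigma2 '' A ∪ sigma1inv '' A ∪ sigma2inv '' A ⊆
        H ∪ V ∪ D₁ ∪ D₂ := by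
      intro q hq
      rcases hq with ((((hq | hq) | hq) | hq) | hq)
      · rcases hq with hq | hq
        · exact Or.inl (Or.inl (Or.inl hq))
        · exact Or.inl (Or.inl (Or.inr hq))
      · rcases hq with ⟨p, hp, rfl⟩
        rcases hp with hp | hp
        · exact Or.inl (Or.inl (Or.inl hp))
        · refine Or.inl (Or.inr ?_)
          show (p.1 + p.2) - p.2 ∈ J
          simpa using (show p.1 ∈ J from hp)
      · rcases hq with ⟨p, hp, rfl⟩
        rcases hp with hp | hp
        · refine Or.inl (Or.inr ?_)
          show p.1 - (p.1 + p.2) ∈ J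
          have h : p.1 - (p.1 + p.2) = -p.2 := by abel
          rw [h]; exact hJneg _ hp
        · exact Or.inl (Or.inl (Or.inr hp))
      · rcases hq with ⟨p, hp, rfl⟩
        rcases hp with hp | hp
        · exact Or.inl (Or.inl (Or.inl hp))
        · refine Or.inr ?_
          show (p.1 - p.2) + p.2 ∈ J
          simpa using (show p.1 ∈ J from hp)
      · rcases hq with ⟨p, hp, rfl⟩
        rcases hp with hp | hp
        · refine Or.inr ?_
          show p.1 + (p.2 - p.1) ∈ J
          simpa using (show p.2 ∈ J from hp)
        · exact Or.inl (Or.inl (Or.inr hp))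
    intro q hq
    have hq' := key hq
    by_cases hqH : q ∈ H
    · exact Or.inl (Or.inl (Or.inl hqH))
    rcases hq' with ((hq' | hq') | hq') | hq'
    · exact absurd hq' hqH
    · exact Or.inl (Or.inl (Or.inr ⟨hq', hqH⟩))
    · exact Or.inl (Or.inr ⟨hq', hqH⟩)
    · exact Or.inr ⟨hq', hqH⟩
  -- put it together
  refine ⟨A, hAmeas, ?_, ?_, ?_⟩
  · rw [hAvol]
    have : (0 : ENNReal) < ENNReal.ofReal ε := by
      simpa using ENNReal.ofReal_pos.mpr hε0
    exact lt_of_lt_of_le this le_self_add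
  · rw [hAvol, ← ENNReal.ofReal_add hε0.le (by nlinarith)]
    apply ENNReal.ofReal_le_ofReal
    nlinarith
  · have step1 : volume (A ∪ sigma1 '' A ∪ sigma2 '' A ∪ sigma1inv '' A ∪ sigma2inv '' A)
        ≤ volume H + volume (V \ H) + volume (D₁ \ H) + volume (D₂ \ H) := by
      refine le_trans (measure_mono hUsub) ?_
      refine le_trans (measure_union_le _ _) ?_
      gcongr
      refine le_trans (measure_union_le _ _) ?_
      gcongr
      exact measure_union_le _ _
    have step2 : volume H + volume (V \ H) + volume (D₁ \ H) + volume (D₂ \ H)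
        = ENNReal.ofReal (ε + 3 * (ε * (1 - ε))) := by
      rw [hHvol, hVHvol, hD₁Hvol, hD₂Hvol,
        ← ENNReal.ofReal_add hε0.le (by nlinarith),
        ← ENNReal.ofReal_add (by nlinarith) (by nlinarith),
        ← ENNReal.ofReal_add (by nlinarith) (by nlinarith)]
      ring_nf
    have step3 : ENNReal.ofReal (ε + 3 * (ε * (1 - ε)))
        < ENNReal.ofReal (2 * (ε + ε * (1 - ε))) := by
      refine (ENNReal.ofReal_lt_ofReal_iff_of_nonneg (by nlinarith)).mpr ?_
      nlinarith
    have step4 : ENNReal.ofReal (2 * (ε + ε * (1 - ε))) = 2 * volume A := by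
      rw [hAvol, ← ENNReal.ofReal_add hε0.le (by nlinarith),
        ← ENNReal.ofReal_ofNat 2, ← ENNReal.ofReal_mul (by norm_num)]
    calc volume (A ∪ sigma1 '' A ∪ sigma2 '' A ∪ sigma1inv '' A ∪ sigma2inv '' A)
        ≤ ENNReal.ofReal (ε + 3 * (ε * (1 - ε))) := step2 ▸ step1
      _ < ENNReal.ofReal (2 * (ε + ε * (1 - ε))) := step3
      _ = 2 * volume A := step4
end

section
/- For every ε with 0 < ε < 1/10, the set C_U = π({(x,y) ∈ ℝ² : |x| ≤ ε or |y| ≤ ε}) satisfies m(C_U ∪ σ₁(C_U) ∪ σ₂(C_U) ∪ σ₁⁻¹(C_U) ∪ σ₂⁻¹(C_U)) < 2·m(C_U), where m is the Haar probability measure on 𝕋². -/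
open MeasureTheory

/-- The set `C_U = π({(x,y) : |x| ≤ ε or |y| ≤ ε})`. -/
noncomputable def CU (ε : ℝ) : Set Torus :=
  torusProj '' {p : ℝ × ℝ | |p.1| ≤ ε ∨ |p.2| ≤ ε}

/-- The set `C_D = C_U ∪ π({(x,y) : |x+y| ≤ ε})`. -/
noncomputable def CD (ε : ℝ) : Set Torus :=
  CU ε ∪ torusProj '' {p : ℝ × ℝ | |p.1 + p.2| ≤ ε}

namespace CUBadAux

open Set Metric

local instance instFactZeroLtOneReal : Fact ((0 : ℝ) < 1) := ⟨zero_lt_one⟩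

/-- The closed ball of radius ε around 0 in the circle. -/
noncomputable def Bset (ε : ℝ) : Set (AddCircle (1 : ℝ)) := Metric.closedBall 0 ε

lemma measurableSet_Bset (ε : ℝ) : MeasurableSet (Bset ε) :=
  measurableSet_closedBall

lemma volume_Bset {ε : ℝ} (h1 : 2 * ε ≤ 1) : volume (Bset ε) = ENNReal.ofReal (2 * ε) := by
  rw [Bset, AddCircle.volume_closedBall, min_eq_right h1]

lemma sub_mem_Bset_comm {ε : ℝ} (a b : AddCircle (1 : ℝ)) :
    a - b ∈ Bset ε ↔ b - a ∈ Bset ε := by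
  simp only [Bset, mem_closedBall, dist_zero_right]
  rw [norm_sub_rev]

lemma image_abs_le {ε : ℝ} (h1 : ε < 1 / 2) :
    ((↑) : ℝ → AddCircle (1 : ℝ)) '' {x | |x| ≤ ε} = Bset ε := by
  ext y
  constructor
  · rintro ⟨x, hx, rfl⟩
    simp only [mem_setOf_eq] at hx
    rw [Bset, mem_closedBall, dist_zero_right]
    calc ‖(x : AddCircle (1 : ℝ))‖ = |x| := by
          rw [AddCircle.norm_coe_eq_abs_iff _ one_ne_zero]
          simpa using hx.trans h1.le
      _ ≤ ε := hx
  · intro hy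
    obtain ⟨x, rfl⟩ := QuotientAddGroup.mk_surjective y
    have hx : x ∈ ((↑) : ℝ → AddCircle (1 : ℝ)) ⁻¹'
        (Metric.closedBall ((0 : ℝ) : AddCircle (1 : ℝ)) ε) := by
      simpa [Bset] using hy
    rw [AddCircle.coe_real_preimage_closedBall_eq_iUnion] at hx
    obtain ⟨z, hz⟩ := mem_iUnion.mp hx
    refine ⟨x - z • 1, ?_, ?_⟩
    · simp only [mem_setOf_eq]
      simp only [mem_closedBall, Real.dist_eq, zero_add] at hz
      simpa [abs_sub_comm] using hz
    · have h : ((z • (1 : ℝ) : ℝ) : AddCircle (1 : ℝ)) = 0 :=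
        (QuotientAddGroup.eq_zero_iff _).2
          (AddSubgroup.zsmul_mem _ (AddSubgroup.mem_zmultiples _) _)
      show ((x - z • (1 : ℝ) : ℝ) : AddCircle (1 : ℝ)) = _
      rw [AddCircle.coe_sub, h, sub_zero]

lemma CU_eq {ε : ℝ} (h1 : ε < 1 / 2) :
    CU ε = (Bset ε ×ˢ univ) ∪ ((univ : Set (AddCircle (1 : ℝ))) ×ˢ Bset ε) := by
  have hbase : {p : ℝ × ℝ | |p.1| ≤ ε ∨ |p.2| ≤ ε}
      = ({x : ℝ | |x| ≤ ε} ×ˢ (univ : Set ℝ)) ∪ ((univ : Set ℝ) ×ˢ {y : ℝ | |y| ≤ ε}) := by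
    ext ⟨x, y⟩
    simp [Set.mem_prod]
  have himg : ∀ (s t : Set ℝ), torusProj '' (s ×ˢ t)
      = (((↑) : ℝ → AddCircle (1 : ℝ)) '' s) ×ˢ (((↑) : ℝ → AddCircle (1 : ℝ)) '' t) :=
    fun s t => (Set.prod_image_image_eq).symm
  have hu : ((↑) : ℝ → AddCircle (1 : ℝ)) '' (univ : Set ℝ) = univ :=
    Set.image_univ_of_surjective QuotientAddGroup.mk_surjective
  rw [CU, hbase, Set.image_union, himg, himg, hu, image_abs_le h1]

lemma mp_swap : MeasurePreserving (Prod.swap : Torus → Torus) volume volume := by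
  rw [Measure.volume_eq_prod]
  exact Measure.measurePreserving_swap

lemma mp_sigma2 : MeasurePreserving sigma2 volume volume := by
  rw [Measure.volume_eq_prod]
  exact (MeasurePreserving.id volume).skew_product (measurable_fst.add measurable_snd)
    (Filter.Eventually.of_forall fun a => map_add_left_eq_self volume a)

lemma mp_sigma2inv : MeasurePreserving sigma2inv volume volume := by
  rw [Measure.volume_eq_prod]
  exact (MeasurePreserving.id volume).skew_product (measurable_snd.sub measurable_fst)
    (Filter.Eventually.of_forall fun a => (measurePreserving_sub_right volume a).map_eq)

lemma sigma1_eq : sigma1 = Prod.swap ∘ sigma2 ∘ Prod.swap := by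
  funext p
  simp [sigma1, sigma2, Prod.swap, add_comm]

lemma sigma1inv_eq : sigma1inv = Prod.swap ∘ sigma2inv ∘ Prod.swap := by
  funext p
  simp [sigma1inv, sigma2inv, Prod.swap]

lemma mp_sigma1 : MeasurePreserving sigma1 volume volume := by
  rw [sigma1_eq]
  exact mp_swap.comp (mp_sigma2.comp mp_swap)

lemma mp_sigma1inv : MeasurePreserving sigma1inv volume volume := by
  rw [sigma1inv_eq]
  exact mp_swap.comp (mp_sigma2inv.comp mp_swap)

lemma left_inv1 : Function.LeftInverse sigma1inv sigma1 := fun p => by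
  simp [sigma1, sigma1inv]

lemma right_inv1 : Function.RightInverse sigma1inv sigma1 := fun p => by
  simp [sigma1, sigma1inv]

lemma left_inv2 : Function.LeftInverse sigma2inv sigma2 := fun p => by
  simp [sigma2, sigma2inv]

lemma right_inv2 : Function.RightInverse sigma2inv sigma2 := fun p => by
  simp [sigma2, sigma2inv]

lemma image_sigma1 (s : Set Torus) : sigma1 '' s = sigma1inv ⁻¹' s :=
  congrFun (Set.image_eq_preimage_of_inverse left_inv1 right_inv1) s

lemma image_sigma1inv (s : Set Torus) : sigma1inv '' s = sigma1 ⁻¹' s :=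
  congrFun (Set.image_eq_preimage_of_inverse right_inv1 left_inv1) s

lemma image_sigma2 (s : Set Torus) : sigma2 '' s = sigma2inv ⁻¹' s :=
  congrFun (Set.image_eq_preimage_of_inverse left_inv2 right_inv2) s

lemma image_sigma2inv (s : Set Torus) : sigma2inv '' s = sigma2 ⁻¹' s :=
  congrFun (Set.image_eq_preimage_of_inverse right_inv2 left_inv2) s

lemma big_subset {ε : ℝ} (h1 : ε < 1 / 2) :
    CU ε ∪ sigma1 '' CU ε ∪ sigma2 '' CU ε ∪ sigma1inv '' CU ε ∪ sigma2inv '' CU ε ⊆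
      ((Bset ε ×ˢ univ) ∪ ((univ : Set (AddCircle (1 : ℝ))) ×ˢ Bset ε)) ∪
      (sigma2 ⁻¹' ((Bset ε)ᶜ ×ˢ Bset ε) ∪ sigma2inv ⁻¹' ((Bset ε)ᶜ ×ˢ Bset ε)) := by
  rw [CU_eq h1, image_sigma1, image_sigma1inv, image_sigma2, image_sigma2inv]
  intro p hp
  simp only [Set.mem_union, Set.mem_preimage, Set.mem_prod, Set.mem_univ, true_and, and_true,
    Set.mem_compl_iff, sigma1, sigma2, sigma1inv, sigma2inv] at hp ⊢
  rw [sub_mem_Bset_comm p.1 p.2] at hp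
  by_cases hA : p.1 ∈ Bset ε
  · tauto
  · tauto

end CUBadAux

/-- `C_U` together with its images under `σ₁, σ₂, σ₁⁻¹, σ₂⁻¹` has measure less than `2·m(C_U)`. -/
theorem CU_bad_expansion (ε : ℝ) (hε : 0 < ε) (hε' : ε < 1 / 10) :
    volume (CU ε ∪ sigma1 '' CU ε ∪ sigma2 '' CU ε ∪ sigma1inv '' CU ε ∪ sigma2inv '' CU ε)
      < 2 * volume (CU ε) := by
  classical
  haveI : Fact ((0 : ℝ) < 1) := ⟨zero_lt_one⟩
  have hε2 : ε < 1 / 2 := by linarith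
  have hc0 : (0 : ℝ) < 2 * ε := by positivity
  have hc1 : 2 * ε < 1 / 5 := by linarith
  have hBmeas : MeasurableSet (CUBadAux.Bset ε) := CUBadAux.measurableSet_Bset ε
  have hBvol : volume (CUBadAux.Bset ε) = ENNReal.ofReal (2 * ε) :=
    CUBadAux.volume_Bset (by linarith)
  have hBc_vol : volume (CUBadAux.Bset ε)ᶜ = ENNReal.ofReal (1 - 2 * ε) := by
    rw [measure_compl hBmeas (measure_ne_top _ _), hBvol, AddCircle.measure_univ,
      ← ENNReal.ofReal_sub _ hc0.le]
  have hprodBcB : volume ((CUBadAux.Bset ε)ᶜ ×ˢ CUBadAux.Bset ε)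
      = ENNReal.ofReal ((1 - 2 * ε) * (2 * ε)) := by
    rw [Measure.volume_eq_prod, Measure.prod_prod, hBc_vol, hBvol,
      ← ENNReal.ofReal_mul (by linarith)]
  have hA1A2 : volume ((CUBadAux.Bset ε ×ˢ Set.univ)
      ∪ ((Set.univ : Set (AddCircle (1 : ℝ))) ×ˢ CUBadAux.Bset ε))
      = ENNReal.ofReal (1 - (1 - 2 * ε) * (1 - 2 * ε)) := by
    have hcompl : (CUBadAux.Bset ε ×ˢ Set.univ)
        ∪ ((Set.univ : Set (AddCircle (1 : ℝ))) ×ˢ CUBadAux.Bset ε)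
        = ((CUBadAux.Bset ε)ᶜ ×ˢ (CUBadAux.Bset ε)ᶜ)ᶜ := by
      ext p
      simp only [Set.mem_union, Set.mem_prod, Set.mem_univ, and_true, true_and,
        Set.mem_compl_iff, not_and_or, not_not]
    have hprod : volume ((CUBadAux.Bset ε)ᶜ ×ˢ (CUBadAux.Bset ε)ᶜ)
        = ENNReal.ofReal ((1 - 2 * ε) * (1 - 2 * ε)) := by
      rw [Measure.volume_eq_prod, Measure.prod_prod, hBc_vol,
        ← ENNReal.ofReal_mul (by linarith)]
    have huniv : volume (Set.univ : Set Torus) = 1 := by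
      rw [Measure.volume_eq_prod, ← Set.univ_prod_univ, Measure.prod_prod,
        AddCircle.measure_univ, ENNReal.ofReal_one, one_mul]
    rw [hcompl, measure_compl (hBmeas.compl.prod hBmeas.compl) (measure_ne_top _ _), hprod,
      huniv, ← ENNReal.ofReal_one, ← ENNReal.ofReal_sub _ (by nlinarith)]
  have hCUvol : volume (CU ε) = ENNReal.ofReal (1 - (1 - 2 * ε) * (1 - 2 * ε)) := by
    rw [CUBadAux.CU_eq hε2, hA1A2]
  have hpre2 : volume (sigma2 ⁻¹' ((CUBadAux.Bset ε)ᶜ ×ˢ CUBadAux.Bset ε))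
      = ENNReal.ofReal ((1 - 2 * ε) * (2 * ε)) := by
    rw [CUBadAux.mp_sigma2.measure_preimage
      ((hBmeas.compl.prod hBmeas).nullMeasurableSet), hprodBcB]
  have hpre2i : volume (sigma2inv ⁻¹' ((CUBadAux.Bset ε)ᶜ ×ˢ CUBadAux.Bset ε))
      = ENNReal.ofReal ((1 - 2 * ε) * (2 * ε)) := by
    rw [CUBadAux.mp_sigma2inv.measure_preimage
      ((hBmeas.compl.prod hBmeas).nullMeasurableSet), hprodBcB]
  have hle : volume (CU ε ∪ sigma1 '' CU ε ∪ sigma2 '' CU ε ∪ sigma1inv '' CU ε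
      ∪ sigma2inv '' CU ε)
      ≤ ENNReal.ofReal ((1 - (1 - 2 * ε) * (1 - 2 * ε)) + 2 * ((1 - 2 * ε) * (2 * ε))) := by
    refine (measure_mono (CUBadAux.big_subset hε2)).trans ?_
    refine (measure_union_le _ _).trans ?_
    have h2 : volume (sigma2 ⁻¹' ((CUBadAux.Bset ε)ᶜ ×ˢ CUBadAux.Bset ε)
        ∪ sigma2inv ⁻¹' ((CUBadAux.Bset ε)ᶜ ×ˢ CUBadAux.Bset ε))
        ≤ ENNReal.ofReal (2 * ((1 - 2 * ε) * (2 * ε))) := by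
      refine (measure_union_le _ _).trans ?_
      rw [hpre2, hpre2i, ← ENNReal.ofReal_add (by nlinarith) (by nlinarith)]
      exact ENNReal.ofReal_le_ofReal (by nlinarith)
    calc volume ((CUBadAux.Bset ε ×ˢ Set.univ)
          ∪ ((Set.univ : Set (AddCircle (1 : ℝ))) ×ˢ CUBadAux.Bset ε))
          + volume (sigma2 ⁻¹' ((CUBadAux.Bset ε)ᶜ ×ˢ CUBadAux.Bset ε)
            ∪ sigma2inv ⁻¹' ((CUBadAux.Bset ε)ᶜ ×ˢ CUBadAux.Bset ε))
        ≤ ENNReal.ofReal (1 - (1 - 2 * ε) * (1 - 2 * ε))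
          + ENNReal.ofReal (2 * ((1 - 2 * ε) * (2 * ε))) := by
          rw [hA1A2]; exact add_le_add le_rfl h2
      _ = ENNReal.ofReal ((1 - (1 - 2 * ε) * (1 - 2 * ε)) + 2 * ((1 - 2 * ε) * (2 * ε))) := by
          rw [← ENNReal.ofReal_add (by nlinarith) (by nlinarith)]
  refine hle.trans_lt ?_
  rw [hCUvol, show (2 : ENNReal) = ENNReal.ofReal 2 by simp,
    ← ENNReal.ofReal_mul (by norm_num)]
  exact (ENNReal.ofReal_lt_ofReal_iff (by nlinarith)).mpr (by nlinarith)
end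

section
/- For every ε with 0 < ε < 1/10, the set C_D = C_U ∪ π({(x,y) ∈ ℝ² : |x+y| ≤ ε}) satisfies m(C_D ∪ σ₁(C_D) ∪ σ₂(C_D)) < (4/3)·m(C_D), where m is the Haar probability measure on 𝕋². -/
open MeasureTheory

namespace CDaux

open Set

local notation "K" => AddCircle (1 : ℝ)

lemma coe_eq_coe {x y : ℝ} : (x : K) = (y : K) ↔ ∃ n : ℤ, x - y = n := by
  rw [← sub_eq_zero, ← AddCircle.coe_sub, AddCircle.coe_eq_zero_iff]
  constructor
  · rintro ⟨n, hn⟩; exact ⟨n, by simpa using hn.symm⟩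
  · rintro ⟨n, hn⟩; exact ⟨n, by simpa using hn.symm⟩

lemma mk_surj : Function.Surjective ((↑) : ℝ → K) :=
  fun q => Quotient.exists_rep q

/-- image of an interval in the circle -/
noncomputable def arc (a b : ℝ) : Set K := ((↑) : ℝ → K) '' Icc a b

lemma arc_measurable (a b : ℝ) : MeasurableSet (arc a b) :=
  ((isCompact_Icc.image (AddCircle.continuous_mk' 1)).isClosed).measurableSet

lemma arc_volume {a b : ℝ} (ha : -(1/2 : ℝ) < a) (hab : a ≤ b) (hb : b ≤ 1/2) :
    volume (arc a b) = ENNReal.ofReal (b - a) := by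
  rw [AddCircle.add_projection_respects_measure (T := 1) (-(1/2)) (arc_measurable a b)]
  have hset : (QuotientAddGroup.mk ⁻¹' (arc a b) : Set ℝ) ∩ Ioc (-(1/2)) (-(1/2) + 1) =
      Icc a b := by
    ext x
    constructor
    · rintro ⟨hx, hx2⟩
      obtain ⟨t, ht, hteq⟩ := hx
      have : (t : K) = (x : K) := hteq
      obtain ⟨n, hn⟩ := coe_eq_coe.mp this
      have h1 : (-1 : ℝ) < n := by
        rw [← hn]
        have := ht.1; have := hx2.2; norm_num at *; linarith
      have h2 : (n : ℝ) < 1 := by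
        rw [← hn]
        have := ht.2; have := hx2.1; norm_num at *; linarith
      have hn0 : n = 0 := by
        have h1' : (-1 : ℤ) < n := by exact_mod_cast h1
        have h2' : n < (1 : ℤ) := by exact_mod_cast h2
        omega
      have : t = x := by rw [hn0] at hn; push_cast at hn; linarith
      rwa [← this]
    · intro hx
      refine ⟨⟨x, hx, rfl⟩, ?_, ?_⟩
      · linarith [hx.1]
      · norm_num; linarith [hx.2]
  rw [hset, Real.volume_Icc]

section eps

variable (ε : ℝ)

/-- The arc `π [-ε, ε]`. -/
noncomputable def A : Set K := arc (-ε) ε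

/-- The vertical strip. -/
noncomputable def SX : Set Torus := {p | p.1 ∈ A ε}

/-- The horizontal strip. -/
noncomputable def SY : Set Torus := {p | p.2 ∈ A ε}

/-- The antidiagonal strip. -/
noncomputable def SP : Set Torus := {p | p.1 + p.2 ∈ A ε}

/-- The diagonal strip. -/
noncomputable def SM : Set Torus := {p | p.1 - p.2 ∈ A ε}

lemma A_measurable : MeasurableSet (A ε) := arc_measurable _ _

lemma SX_measurable : MeasurableSet (SX ε) := (A_measurable ε).preimage measurable_fst
lemma SY_measurable : MeasurableSet (SY ε) := (A_measurable ε).preimage measurable_snd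
lemma SP_measurable : MeasurableSet (SP ε) :=
  (A_measurable ε).preimage (measurable_fst.add measurable_snd)
lemma SM_measurable : MeasurableSet (SM ε) :=
  (A_measurable ε).preimage (measurable_fst.sub measurable_snd)

variable {ε}

lemma A_neg {x : K} (hx : x ∈ A ε) : -x ∈ A ε := by
  obtain ⟨t, ht, rfl⟩ := hx
  exact ⟨-t, ⟨by linarith [ht.2], by linarith [ht.1]⟩, AddCircle.coe_neg 1⟩

lemma A_neg_iff {x : K} : -x ∈ A ε ↔ x ∈ A ε :=
  ⟨fun h => by simpa using A_neg h, A_neg⟩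

lemma A_volume (hε : 0 < ε) (hε' : ε < 1/2) : volume (A ε) = ENNReal.ofReal (2 * ε) := by
  rw [A, arc_volume (by linarith) (by linarith) (by linarith)]
  norm_num [two_mul]

/-! ### Set identities -/

lemma image_fst_eq : torusProj '' {p : ℝ × ℝ | |p.1| ≤ ε} = SX ε := by
  ext q
  constructor
  · rintro ⟨⟨x, y⟩, hx, rfl⟩
    exact ⟨x, abs_le.mp hx, rfl⟩
  · rintro ⟨t, ht, hteq⟩
    obtain ⟨y, hy⟩ := mk_surj q.2
    exact ⟨(t, y), abs_le.mpr ⟨ht.1, ht.2⟩, Prod.ext hteq hy⟩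

lemma image_snd_eq : torusProj '' {p : ℝ × ℝ | |p.2| ≤ ε} = SY ε := by
  ext q
  constructor
  · rintro ⟨⟨x, y⟩, hy, rfl⟩
    exact ⟨y, abs_le.mp hy, rfl⟩
  · rintro ⟨t, ht, hteq⟩
    obtain ⟨x, hx⟩ := mk_surj q.1
    exact ⟨(x, t), abs_le.mpr ⟨ht.1, ht.2⟩, Prod.ext hx hteq⟩

lemma image_sum_eq : torusProj '' {p : ℝ × ℝ | |p.1 + p.2| ≤ ε} = SP ε := by
  ext q
  constructor
  · rintro ⟨⟨x, y⟩, hxy, rfl⟩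
    exact ⟨x + y, abs_le.mp hxy, by exact AddCircle.coe_add 1 x y⟩
  · rintro ⟨t, ht, hteq⟩
    obtain ⟨x, hx⟩ := mk_surj q.1
    refine ⟨(x, t - x), ?_, ?_⟩
    · simpa using abs_le.mpr ⟨ht.1, ht.2⟩
    · refine Prod.ext hx ?_
      show ((t - x : ℝ) : K) = q.2
      rw [AddCircle.coe_sub, hx, hteq]
      abel

lemma CD_eq : CD ε = SX ε ∪ SY ε ∪ SP ε := by
  rw [CD, CU]
  rw [show {p : ℝ × ℝ | |p.1| ≤ ε ∨ |p.2| ≤ ε} =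
      {p : ℝ × ℝ | |p.1| ≤ ε} ∪ {p : ℝ × ℝ | |p.2| ≤ ε} from rfl]
  rw [Set.image_union, image_fst_eq, image_snd_eq, image_sum_eq]

lemma sigma1_image : sigma1 '' CD ε = SM ε ∪ SY ε ∪ SX ε := by
  rw [Set.image_eq_preimage_of_inverse
    (g := sigma1inv) (fun p => by simp [sigma1, sigma1inv])
    (fun p => by simp [sigma1, sigma1inv])]
  rw [CD_eq]
  ext p
  simp only [Set.mem_preimage, Set.mem_union, sigma1inv, SX, SY, SP, SM, Set.mem_setOf_eq]
  constructor
  · rintro ((h | h) | h)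
    · exact Or.inl (Or.inl h)
    · exact Or.inl (Or.inr h)
    · exact Or.inr (by simpa using h)
  · rintro ((h | h) | h)
    · exact Or.inl (Or.inl h)
    · exact Or.inl (Or.inr h)
    · exact Or.inr (by simpa using h)

lemma sigma2_image : sigma2 '' CD ε = SX ε ∪ SM ε ∪ SY ε := by
  rw [Set.image_eq_preimage_of_inverse
    (g := sigma2inv) (fun p => by simp [sigma2, sigma2inv])
    (fun p => by simp [sigma2, sigma2inv])]
  rw [CD_eq]
  ext p
  simp only [Set.mem_preimage, Set.mem_union, sigma2inv, SX, SY, SP, SM, Set.mem_setOf_eq]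
  constructor
  · rintro ((h | h) | h)
    · exact Or.inl (Or.inl h)
    · exact Or.inl (Or.inr (by rw [← A_neg_iff]; simpa [neg_sub] using h))
    · exact Or.inr (by simpa using h)
  · rintro ((h | h) | h)
    · exact Or.inl (Or.inl h)
    · exact Or.inl (Or.inr (by rw [← A_neg_iff] at h; simpa [neg_sub] using h))
    · exact Or.inr (by simpa using h)

lemma union_eq :
    CD ε ∪ sigma1 '' CD ε ∪ sigma2 '' CD ε = SX ε ∪ SY ε ∪ SP ε ∪ SM ε := by
  rw [sigma1_image, sigma2_image, CD_eq]
  ext p; simp only [Set.mem_union]; tauto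

/-! ### Volume computations -/

lemma SX_volume (hε : 0 < ε) (hε' : ε < 1/2) : volume (SX ε) = ENNReal.ofReal (2 * ε) := by
  have : SX ε = (A ε) ×ˢ (Set.univ : Set K) := by
    ext p; simp [SX, Set.mem_prod]
  rw [this, Measure.volume_eq_prod, Measure.prod_prod, A_volume hε hε']
  simp

lemma SY_volume (hε : 0 < ε) (hε' : ε < 1/2) : volume (SY ε) = ENNReal.ofReal (2 * ε) := by
  have : SY ε = (Set.univ : Set K) ×ˢ (A ε) := by
    ext p; simp [SY, Set.mem_prod]
  rw [this, Measure.volume_eq_prod, Measure.prod_prod, A_volume hε hε']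
  simp

lemma SP_volume (hε : 0 < ε) (hε' : ε < 1/2) : volume (SP ε) = ENNReal.ofReal (2 * ε) := by
  rw [Measure.volume_eq_prod, Measure.prod_apply (SP_measurable ε)]
  have h : ∀ u : K, volume (Prod.mk u ⁻¹' SP ε) = ENNReal.ofReal (2 * ε) := by
    intro u
    have : Prod.mk u ⁻¹' SP ε = (fun v => u + v) ⁻¹' (A ε) := rfl
    rw [this, measure_preimage_add, A_volume hε hε']
  simp_rw [h]
  simp [lintegral_const]

lemma SM_volume (hε : 0 < ε) (hε' : ε < 1/2) : volume (SM ε) = ENNReal.ofReal (2 * ε) := by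
  rw [Measure.volume_eq_prod, Measure.prod_apply (SM_measurable ε)]
  have h : ∀ u : K, volume (Prod.mk u ⁻¹' SM ε) = ENNReal.ofReal (2 * ε) := by
    intro u
    have : Prod.mk u ⁻¹' SM ε = (fun v => -u + v) ⁻¹' (A ε) := by
      ext v
      show u - v ∈ A ε ↔ -u + v ∈ A ε
      rw [← A_neg_iff (x := u - v)]
      constructor <;> intro h <;> simpa [neg_sub, sub_eq_neg_add] using h
    rw [this, measure_preimage_add, A_volume hε hε']
  simp_rw [h]
  simp [lintegral_const]

lemma SXSY_volume (hε : 0 < ε) (hε' : ε < 1/2) :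
    volume (SX ε ∩ SY ε) = ENNReal.ofReal (2 * ε) * ENNReal.ofReal (2 * ε) := by
  have : SX ε ∩ SY ε = (A ε) ×ˢ (A ε) := by
    ext p; simp [SX, SY, Set.mem_prod]
  rw [this, Measure.volume_eq_prod, Measure.prod_prod, A_volume hε hε']

lemma SXSP_volume (hε : 0 < ε) (hε' : ε < 1/2) :
    volume (SX ε ∩ SP ε) = ENNReal.ofReal (2 * ε) * ENNReal.ofReal (2 * ε) := by
  rw [Measure.volume_eq_prod, Measure.prod_apply ((SX_measurable ε).inter (SP_measurable ε))]
  have h : ∀ u : K, volume (Prod.mk u ⁻¹' (SX ε ∩ SP ε)) =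
      (A ε).indicator (fun _ => ENNReal.ofReal (2 * ε)) u := by
    intro u
    by_cases hu : u ∈ A ε
    · have : Prod.mk u ⁻¹' (SX ε ∩ SP ε) = (fun v => u + v) ⁻¹' (A ε) := by
        ext v; simp [SX, SP, hu]
      rw [this, measure_preimage_add, A_volume hε hε', Set.indicator_of_mem hu]
    · have : Prod.mk u ⁻¹' (SX ε ∩ SP ε) = ∅ := by
        ext v; simp [SX, SP, hu]
      rw [this, Set.indicator_of_notMem hu]
      simp
  simp_rw [h]
  rw [lintegral_indicator_const (A_measurable ε), A_volume hε hε']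

lemma SYSP_volume (hε : 0 < ε) (hε' : ε < 1/2) :
    volume (SY ε ∩ SP ε) = ENNReal.ofReal (2 * ε) * ENNReal.ofReal (2 * ε) := by
  rw [Measure.volume_eq_prod, Measure.prod_apply_symm ((SY_measurable ε).inter (SP_measurable ε))]
  have h : ∀ v : K, volume ((fun u => (u, v)) ⁻¹' (SY ε ∩ SP ε)) =
      (A ε).indicator (fun _ => ENNReal.ofReal (2 * ε)) v := by
    intro v
    by_cases hv : v ∈ A ε
    · have : (fun u => (u, v)) ⁻¹' (SY ε ∩ SP ε) = (fun u => u + v) ⁻¹' (A ε) := by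
        ext u; simp [SY, SP, hv]
      rw [this, measure_preimage_add_right, A_volume hε hε', Set.indicator_of_mem hv]
    · have : (fun u => (u, v)) ⁻¹' (SY ε ∩ SP ε) = ∅ := by
        ext u; simp [SY, SP, hv]
      rw [this, Set.indicator_of_notMem hv]
      simp
  simp_rw [h]
  rw [lintegral_indicator_const (A_measurable ε), A_volume hε hε']

lemma SMSX_volume (hε : 0 < ε) (hε' : ε < 1/2) :
    volume (SM ε ∩ SX ε) = ENNReal.ofReal (2 * ε) * ENNReal.ofReal (2 * ε) := by
  rw [Measure.volume_eq_prod, Measure.prod_apply ((SM_measurable ε).inter (SX_measurable ε))]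
  have h : ∀ u : K, volume (Prod.mk u ⁻¹' (SM ε ∩ SX ε)) =
      (A ε).indicator (fun _ => ENNReal.ofReal (2 * ε)) u := by
    intro u
    by_cases hu : u ∈ A ε
    · have : Prod.mk u ⁻¹' (SM ε ∩ SX ε) = (fun v => -u + v) ⁻¹' (A ε) := by
        ext v
        show (u - v ∈ A ε ∧ u ∈ A ε) ↔ -u + v ∈ A ε
        rw [← A_neg_iff (x := u - v)]
        constructor
        · rintro ⟨h1, _⟩; simpa [neg_sub, sub_eq_neg_add] using h1
        · intro h1; exact ⟨by simpa [neg_sub, sub_eq_neg_add] using h1, hu⟩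
      rw [this, measure_preimage_add, A_volume hε hε', Set.indicator_of_mem hu]
    · have : Prod.mk u ⁻¹' (SM ε ∩ SX ε) = ∅ := by
        ext v; simp [SM, SX, hu]
      rw [this, Set.indicator_of_notMem hu]
      simp
  simp_rw [h]
  rw [lintegral_indicator_const (A_measurable ε), A_volume hε hε']

lemma SMSY_volume (hε : 0 < ε) (hε' : ε < 1/2) :
    volume (SM ε ∩ SY ε) = ENNReal.ofReal (2 * ε) * ENNReal.ofReal (2 * ε) := by
  rw [Measure.volume_eq_prod, Measure.prod_apply_symm ((SM_measurable ε).inter (SY_measurable ε))]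
  have h : ∀ v : K, volume ((fun u => (u, v)) ⁻¹' (SM ε ∩ SY ε)) =
      (A ε).indicator (fun _ => ENNReal.ofReal (2 * ε)) v := by
    intro v
    by_cases hv : v ∈ A ε
    · have : (fun u => (u, v)) ⁻¹' (SM ε ∩ SY ε) = (fun u => -v + u) ⁻¹' (A ε) := by
        ext u
        show (u - v ∈ A ε ∧ v ∈ A ε) ↔ -v + u ∈ A ε
        constructor
        · rintro ⟨h1, _⟩; simpa [sub_eq_neg_add, add_comm] using h1
        · intro h1; exact ⟨by simpa [sub_eq_neg_add, add_comm] using h1, hv⟩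
      rw [this, measure_preimage_add, A_volume hε hε', Set.indicator_of_mem hv]
    · have : (fun u => (u, v)) ⁻¹' (SM ε ∩ SY ε) = ∅ := by
        ext u; simp [SM, SY, hv]
      rw [this, Set.indicator_of_notMem hv]
      simp
  simp_rw [h]
  rw [lintegral_indicator_const (A_measurable ε), A_volume hε hε']

/-! ### The extra box inside `SX ∩ SY` avoiding `SM` -/

noncomputable def B1 : Set K := arc (3*ε/4) ε
noncomputable def B2 : Set K := arc (-ε) (-(3*ε/4))

lemma B_volume (hε : 0 < ε) (hε' : ε < 1/2) :
    volume ((B1 (ε := ε)) ×ˢ (B2 (ε := ε))) =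
      ENNReal.ofReal (ε/4) * ENNReal.ofReal (ε/4) := by
  rw [Measure.volume_eq_prod, Measure.prod_prod, B1, B2,
    arc_volume (by linarith) (by linarith) (by linarith),
    arc_volume (by linarith) (by linarith) (by linarith),
    show ε - 3*ε/4 = ε/4 by ring, show -(3*ε/4) - -ε = ε/4 by ring]

lemma B_subset (hε : 0 < ε) :
    (B1 (ε := ε)) ×ˢ (B2 (ε := ε)) ⊆ SX ε ∩ SY ε := by
  rintro ⟨u, v⟩ ⟨⟨s, hs, hsu⟩, ⟨t, ht, htv⟩⟩
  constructor
  · exact ⟨s, ⟨by linarith [hs.1], hs.2⟩, hsu⟩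
  · exact ⟨t, ⟨ht.1, by linarith [ht.2]⟩, htv⟩

lemma B_disjoint (hε : 0 < ε) (hε' : ε < 1/4) :
    Disjoint ((B1 (ε := ε)) ×ˢ (B2 (ε := ε))) (SM ε) := by
  rw [Set.disjoint_left]
  rintro ⟨u, v⟩ ⟨⟨s, hs, hsu⟩, ⟨t, ht, htv⟩⟩ hm
  obtain ⟨r, hr, hreq⟩ := hm
  have hsu' : (s : K) = u := hsu
  have htv' : (t : K) = v := htv
  have hreq' : (r : K) = u - v := hreq
  have huv : ((r : ℝ) : K) = ((s - t : ℝ) : K) := by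
    rw [AddCircle.coe_sub, hsu', htv', hreq']
  obtain ⟨n, hn⟩ := coe_eq_coe.mp huv
  have hst1 : s - t ≥ 3*ε/2 := by linarith [hs.1, ht.2]
  have hst2 : s - t ≤ 2*ε := by linarith [hs.2, ht.1]
  have h1 : (n : ℝ) < 0 := by rw [← hn]; linarith [hr.2, hst1, hε]
  have h2 : (-1 : ℝ) < n := by rw [← hn]; linarith [hr.1, hst2, hε']
  have h1' : n < (0 : ℤ) := by exact_mod_cast h1
  have h2' : (-1 : ℤ) < n := by exact_mod_cast h2
  omega

end eps

end CDaux

open CDaux in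
/-- `C_D` together with its images under `σ₁, σ₂` has measure less than `(4/3)·m(C_D)`. -/
theorem CD_bad_expansion (ε : ℝ) (hε : 0 < ε) (hε' : ε < 1 / 10) :
    volume (CD ε ∪ sigma1 '' CD ε ∪ sigma2 '' CD ε) < (4 / 3 : ENNReal) * volume (CD ε) := by
  have hε2 : ε < 1/2 := by linarith
  have hε4 : ε < 1/4 := by linarith
  set X := SX ε
  set Y := SY ε
  set P := SP ε
  set M := SM ε
  set B := (B1 (ε := ε)) ×ˢ (B2 (ε := ε)) with hB
  have hXm := SX_measurable ε
  have hYm := SY_measurable ε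
  have hPm := SP_measurable ε
  have hMm := SM_measurable ε
  have hBm : MeasurableSet B :=
    ((arc_measurable _ _).prod (arc_measurable _ _))
  -- real volumes
  set f : Set Torus → ℝ := fun s => (volume s).toReal with hf
  have ftop : ∀ s : Set Torus, volume s ≠ ⊤ := fun s => measure_ne_top _ _
  have toRealEq : ∀ (s : Set Torus) (c : ℝ), 0 ≤ c → volume s = ENNReal.ofReal c → f s = c := by
    intro s c hc h
    simp [hf, h, ENNReal.toReal_ofReal hc]
  have sq : ENNReal.ofReal (2*ε) * ENNReal.ofReal (2*ε) = ENNReal.ofReal (4*ε^2) := by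
    rw [← ENNReal.ofReal_mul (by linarith)]; ring_nf
  have hεsq : (0:ℝ) ≤ 4*ε^2 := by positivity
  have fX : f X = 2*ε := toRealEq _ _ (by linarith) (SX_volume hε hε2)
  have fY : f Y = 2*ε := toRealEq _ _ (by linarith) (SY_volume hε hε2)
  have fP : f P = 2*ε := toRealEq _ _ (by linarith) (SP_volume hε hε2)
  have fM : f M = 2*ε := toRealEq _ _ (by linarith) (SM_volume hε hε2)
  have fXY : f (X ∩ Y) = 4*ε^2 := toRealEq _ _ hεsq (by rw [SXSY_volume hε hε2, sq])
  have fXP : f (X ∩ P) = 4*ε^2 := toRealEq _ _ hεsq (by rw [SXSP_volume hε hε2, sq])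
  have fYP : f (Y ∩ P) = 4*ε^2 := toRealEq _ _ hεsq (by rw [SYSP_volume hε hε2, sq])
  have fMX : f (M ∩ X) = 4*ε^2 := toRealEq _ _ hεsq (by rw [SMSX_volume hε hε2, sq])
  have fMY : f (M ∩ Y) = 4*ε^2 := toRealEq _ _ hεsq (by rw [SMSY_volume hε hε2, sq])
  have fB : f B = ε^2/16 := toRealEq _ _ (by positivity)
    (by rw [hB, B_volume hε hε2, ← ENNReal.ofReal_mul (by linarith)]; ring_nf)
  -- f is monotone and subadditive and satisfies inclusion-exclusion
  have fmono : ∀ s t : Set Torus, s ⊆ t → f s ≤ f t := by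
    intro s t hst
    exact ENNReal.toReal_le_toReal (ftop s) (ftop t) |>.mpr (measure_mono hst)
  have fIE : ∀ (s t : Set Torus), MeasurableSet t → f (s ∪ t) + f (s ∩ t) = f s + f t := by
    intro s t ht
    have := measure_union_add_inter s ht (μ := volume)
    have h2 := congrArg ENNReal.toReal this
    rwa [ENNReal.toReal_add (ftop _) (ftop _), ENNReal.toReal_add (ftop _) (ftop _)] at h2
  have fsub : ∀ s t : Set Torus, f (s ∪ t) ≤ f s + f t := by
    intro s t
    have := measure_union_le s t (μ := volume)
    have h2 := ENNReal.toReal_le_toReal (ftop _) (by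
      exact ENNReal.add_ne_top.mpr ⟨ftop s, ftop t⟩) |>.mpr this
    rwa [ENNReal.toReal_add (ftop _) (ftop _)] at h2
  have fdiff : ∀ s t : Set Torus, MeasurableSet t → f (s \ t) + f (s ∩ t) = f s := by
    intro s t ht
    have := measure_diff_add_inter s ht (μ := volume)
    have h2 := congrArg ENNReal.toReal this
    rwa [ENNReal.toReal_add (ftop _) (ftop _)] at h2
  -- lower bound for f (CD ε)
  have lowCD : 6*ε - 12*ε^2 ≤ f (X ∪ Y ∪ P) := by
    have h1 : f (X ∪ Y) + f (X ∩ Y) = f X + f Y := fIE X Y hYm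
    have h2 : f ((X ∪ Y) ∪ P) + f ((X ∪ Y) ∩ P) = f (X ∪ Y) + f P := fIE _ P hPm
    have h3 : f ((X ∪ Y) ∩ P) ≤ f (X ∩ P) + f (Y ∩ P) := by
      have : (X ∪ Y) ∩ P ⊆ (X ∩ P) ∪ (Y ∩ P) := by
        rintro p ⟨h | h, hp⟩
        · exact Or.inl ⟨h, hp⟩
        · exact Or.inr ⟨h, hp⟩
      calc f ((X ∪ Y) ∩ P) ≤ f ((X ∩ P) ∪ (Y ∩ P)) := fmono _ _ this
        _ ≤ f (X ∩ P) + f (Y ∩ P) := fsub _ _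
    rw [fX, fY] at h1
    rw [fP] at h2
    rw [fXP, fYP] at h3
    nlinarith [fIE X Y hYm]
  -- upper bound for the triple intersection
  have tripUB : f (X ∩ Y ∩ M) ≤ 4*ε^2 - ε^2/16 := by
    have hdisj : Disjoint (X ∩ Y ∩ M) B :=
      ((B_disjoint hε hε4).mono_right Set.inter_subset_right).symm
    have hsub : (X ∩ Y ∩ M) ∪ B ⊆ X ∩ Y := by
      rintro p (⟨h, _⟩ | h)
      · exact h
      · exact B_subset hε h
    have hunion : volume ((X ∩ Y ∩ M) ∪ B) = volume (X ∩ Y ∩ M) + volume B :=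
      measure_union hdisj hBm
    have : f ((X ∩ Y ∩ M) ∪ B) = f (X ∩ Y ∩ M) + f B := by
      have h2 := congrArg ENNReal.toReal hunion
      rwa [ENNReal.toReal_add (ftop _) (ftop _)] at h2
    have hle : f ((X ∩ Y ∩ M) ∪ B) ≤ f (X ∩ Y) := fmono _ _ hsub
    rw [this, fB, fXY] at hle
    linarith
  -- upper bound for f (M \ (X ∪ Y))
  have MXY : f (M ∩ (X ∪ Y)) ≥ 4*ε^2 + ε^2/16 := by
    have h1 : f ((M ∩ X) ∪ (M ∩ Y)) + f ((M ∩ X) ∩ (M ∩ Y)) = f (M ∩ X) + f (M ∩ Y) :=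
      fIE _ _ (hMm.inter hYm)
    have he : (M ∩ X) ∪ (M ∩ Y) = M ∩ (X ∪ Y) := (Set.inter_union_distrib_left M X Y).symm
    have he2 : (M ∩ X) ∩ (M ∩ Y) = X ∩ Y ∩ M := by
      ext p; simp only [Set.mem_inter_iff]; tauto
    rw [he, he2, fMX, fMY] at h1
    linarith [tripUB]
  have Mdiff : f (M \ (X ∪ Y)) ≤ 2*ε - 4*ε^2 - ε^2/16 := by
    have := fdiff M (X ∪ Y) (hXm.union hYm)
    rw [fM] at this
    linarith [MXY]
  -- upper bound for the union of four sets
  have upU : f (X ∪ Y ∪ P ∪ M) ≤ f (X ∪ Y ∪ P) + (2*ε - 4*ε^2 - ε^2/16) := by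
    have hsub : X ∪ Y ∪ P ∪ M ⊆ (X ∪ Y ∪ P) ∪ (M \ (X ∪ Y)) := by
      rintro p (h | h)
      · exact Or.inl h
      · by_cases hxy : p ∈ X ∪ Y
        · exact Or.inl (Or.inl hxy)
        · exact Or.inr ⟨h, hxy⟩
    calc f (X ∪ Y ∪ P ∪ M) ≤ f ((X ∪ Y ∪ P) ∪ (M \ (X ∪ Y))) := fmono _ _ hsub
      _ ≤ f (X ∪ Y ∪ P) + f (M \ (X ∪ Y)) := fsub _ _
      _ ≤ f (X ∪ Y ∪ P) + (2*ε - 4*ε^2 - ε^2/16) := by linarith [Mdiff]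
  -- put everything together, in the reals
  have main : f (X ∪ Y ∪ P ∪ M) < (4/3) * f (X ∪ Y ∪ P) := by
    nlinarith [lowCD, upU, hε, hε']
  -- back to ENNReal
  rw [union_eq, CD_eq]
  have hne : (4 / 3 : ENNReal) * volume (SX ε ∪ SY ε ∪ SP ε) ≠ ⊤ :=
    ENNReal.mul_ne_top (ENNReal.div_lt_top (by norm_num) (by norm_num)).ne (ftop _)
  rw [← ENNReal.toReal_lt_toReal (ftop _) hne]
  rw [ENNReal.toReal_mul]
  have : (4 / 3 : ENNReal).toReal = 4/3 := by
    rw [ENNReal.toReal_div]; norm_num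
  rw [this]
  exact main
end

section
/- For every ε with 0 < ε < 1/10, the set C_D = C_U ∪ π({(x,y) ∈ ℝ² : |x+y| ≤ ε}) satisfies m(C_D ∪ σ₁(C_D) ∪ σ₂(C_D)) = 8ε − 16ε², where m is the Haar probability measure on 𝕋². -/
open MeasureTheory

open Set

namespace VolCDAux

lemma coe_int_eq_zero (n : ℤ) : ((n : ℝ) : AddCircle (1:ℝ)) = 0 := by
  rw [AddCircle.coe_eq_zero_iff]
  exact ⟨n, by simp⟩

lemma coe_sub_int (t : ℝ) (n : ℤ) : ((t - n : ℝ) : AddCircle (1:ℝ)) = (t : AddCircle (1:ℝ)) := by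
  rw [AddCircle.coe_sub, coe_int_eq_zero, sub_zero]

lemma norm_coe_le_sub (t : ℝ) (n : ℤ) : ‖(t : AddCircle (1:ℝ))‖ ≤ |t - n| := by
  rw [← coe_sub_int t n, UnitAddCircle.norm_eq]
  simpa using round_le (t - n) 0

lemma norm_coe_le (t : ℝ) : ‖(t : AddCircle (1:ℝ))‖ ≤ |t| := by
  simpa using norm_coe_le_sub t 0

lemma exists_lift (q : AddCircle (1:ℝ)) : ∃ x : ℝ, (x : AddCircle (1:ℝ)) = q ∧ |x| = ‖q‖ := by
  induction q using QuotientAddGroup.induction_on with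
  | H y =>
    refine ⟨y - round y, coe_sub_int y (round y), ?_⟩
    rw [UnitAddCircle.norm_eq]

/-- The union of the four strips on the torus, described via the norm. -/
def Vset (ε : ℝ) : Set Torus :=
  {q : Torus | ‖q.1‖ ≤ ε ∨ ‖q.2‖ ≤ ε ∨ ‖q.1 + q.2‖ ≤ ε ∨ ‖q.1 - q.2‖ ≤ ε}

lemma U_eq_V (ε : ℝ) :
    CD ε ∪ sigma1 '' CD ε ∪ sigma2 '' CD ε = Vset ε := by
  ext q
  constructor
  · rintro ((h | ⟨q', h, rfl⟩) | ⟨q', h, rfl⟩)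
    · rcases h with ⟨p, hp, rfl⟩ | ⟨p, hp, rfl⟩
      · rcases hp with hp | hp
        · exact Or.inl (le_trans (norm_coe_le _) hp)
        · exact Or.inr (Or.inl (le_trans (norm_coe_le _) hp))
      · refine Or.inr (Or.inr (Or.inl ?_))
        show ‖(p.1 : AddCircle (1:ℝ)) + (p.2 : AddCircle (1:ℝ))‖ ≤ ε
        rw [← AddCircle.coe_add]
        exact le_trans (norm_coe_le _) hp
    · rcases h with ⟨p, hp, rfl⟩ | ⟨p, hp, rfl⟩
      · rcases hp with hp | hp
        · refine Or.inr (Or.inr (Or.inr ?_))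
          show ‖(torusProj p).1 + (torusProj p).2 - (torusProj p).2‖ ≤ ε
          rw [add_sub_cancel_right]
          exact le_trans (norm_coe_le _) hp
        · exact Or.inr (Or.inl (le_trans (norm_coe_le _) hp))
      · refine Or.inl ?_
        show ‖(p.1 : AddCircle (1:ℝ)) + (p.2 : AddCircle (1:ℝ))‖ ≤ ε
        rw [← AddCircle.coe_add]
        exact le_trans (norm_coe_le _) hp
    · rcases h with ⟨p, hp, rfl⟩ | ⟨p, hp, rfl⟩
      · rcases hp with hp | hp
        · exact Or.inl (le_trans (norm_coe_le _) hp)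
        · refine Or.inr (Or.inr (Or.inr ?_))
          show ‖(torusProj p).1 - ((torusProj p).1 + (torusProj p).2)‖ ≤ ε
          rw [sub_add_cancel_left, norm_neg]
          exact le_trans (norm_coe_le _) hp
      · refine Or.inr (Or.inl ?_)
        show ‖(p.1 : AddCircle (1:ℝ)) + (p.2 : AddCircle (1:ℝ))‖ ≤ ε
        rw [← AddCircle.coe_add]
        exact le_trans (norm_coe_le _) hp
  · rintro (h | h | h | h)
    · obtain ⟨x, hx, hxn⟩ := exists_lift q.1
      obtain ⟨y, hy, -⟩ := exists_lift q.2
      refine Or.inl (Or.inl (Or.inl ⟨(x, y), Or.inl (hxn ▸ h), ?_⟩))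
      simp [torusProj, hx, hy]
    · obtain ⟨x, hx, -⟩ := exists_lift q.1
      obtain ⟨y, hy, hyn⟩ := exists_lift q.2
      refine Or.inl (Or.inl (Or.inl ⟨(x, y), Or.inr (hyn ▸ h), ?_⟩))
      simp [torusProj, hx, hy]
    · obtain ⟨s, hs, hsn⟩ := exists_lift (q.1 + q.2)
      obtain ⟨y, hy, -⟩ := exists_lift q.2
      refine Or.inl (Or.inl (Or.inr ⟨(s - y, y), ?_, ?_⟩))
      · show |s - y + y| ≤ ε
        rw [sub_add_cancel]
        exact hsn ▸ h
      · simp only [torusProj, AddCircle.coe_sub, hs, hy]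
        ext <;> simp
    · obtain ⟨t, ht, htn⟩ := exists_lift (q.1 - q.2)
      obtain ⟨y, hy, -⟩ := exists_lift q.2
      refine Or.inl (Or.inr ⟨torusProj (t, y),
        Or.inl ⟨(t, y), Or.inl (htn ▸ h), rfl⟩, ?_⟩)
      show ((t : AddCircle (1:ℝ)) + (y : AddCircle (1:ℝ)), (y : AddCircle (1:ℝ))) = q
      rw [ht, hy]
      ext
      · show (q.1 - q.2) + q.2 = q.1
        abel
      · rfl

lemma not_near {ε : ℝ} {t : ℝ} (h : ∀ n : ℤ, ε < |t - n|) : ¬ ‖(t : AddCircle (1:ℝ))‖ ≤ ε := by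
  rw [UnitAddCircle.norm_eq]
  exact not_le.2 (h (round t))

lemma near {ε : ℝ} {t : ℝ} (h : ¬ ‖(t : AddCircle (1:ℝ))‖ ≤ ε) (n : ℤ) : ε < |t - n| :=
  lt_of_lt_of_le (not_le.1 h) (norm_coe_le_sub t n)

lemma all_int_1 {ε x : ℝ} (hε : 0 < ε) (h1 : ε < x) (h2 : x < 1 - ε) :
    ∀ n : ℤ, ε < |x - n| := by
  intro n
  rcases le_or_gt (n : ℝ) 0 with h | h
  · calc ε < x - n := by linarith
      _ ≤ |x - n| := le_abs_self _
  · have hn : (1 : ℝ) ≤ n := by exact_mod_cast (by exact_mod_cast h : 0 < n)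
    calc ε < (n : ℝ) - x := by linarith
      _ ≤ |x - n| := by rw [abs_sub_comm]; exact le_abs_self _

lemma all_int_s {ε s : ℝ} (hε : 0 < ε) (h0 : 2 * ε < s) (h2 : s < 2 - 2 * ε)
    (hm : ε < |s - 1|) : ∀ n : ℤ, ε < |s - n| := by
  intro n
  rcases le_or_gt (n : ℝ) 0 with h | h
  · calc ε < s - n := by linarith
      _ ≤ |s - n| := le_abs_self _
  · have hn : 1 ≤ n := by exact_mod_cast h
    rcases hn.eq_or_lt with h1 | h1
    · rw [← h1]; exact_mod_cast hm
    · have hn2 : (2 : ℝ) ≤ n := by exact_mod_cast h1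
      calc ε < (n : ℝ) - s := by linarith
        _ ≤ |s - n| := by rw [abs_sub_comm]; exact le_abs_self _

lemma all_int_d {ε t : ℝ} (hε : 0 < ε) (h0 : -(1 - 2 * ε) < t) (h2 : t < 1 - 2 * ε)
    (hm : ε < |t|) : ∀ n : ℤ, ε < |t - n| := by
  intro n
  rcases lt_trichotomy (n : ℝ) 0 with h | h | h
  · have hni : n ≤ -1 := by
      have : n < 0 := by exact_mod_cast h
      omega
    have hn : (n : ℝ) ≤ -1 := by exact_mod_cast hni
    calc ε < t - n := by linarith
      _ ≤ |t - n| := le_abs_self _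
  · rw [show t - n = t by rw [h, sub_zero]]; exact hm
  · have hn : (1 : ℝ) ≤ n := by exact_mod_cast (by exact_mod_cast h : 0 < n)
    calc ε < (n : ℝ) - t := by linarith
      _ ≤ |t - n| := by rw [abs_sub_comm]; exact le_abs_self _

/-- The four triangles making up the complement in the fundamental square. -/
def Tb (ε : ℝ) : Set (ℝ × ℝ) := {p | ε < p.2 ∧ p.2 + ε < p.1 ∧ p.1 < 1 - p.2 - ε}
def Tl (ε : ℝ) : Set (ℝ × ℝ) := {p | ε < p.1 ∧ p.1 + ε < p.2 ∧ p.2 < 1 - p.1 - ε}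
def Tt (ε : ℝ) : Set (ℝ × ℝ) := {p | p.2 < 1 - ε ∧ 1 - p.2 + ε < p.1 ∧ p.1 < p.2 - ε}
def Tr (ε : ℝ) : Set (ℝ × ℝ) := {p | p.1 < 1 - ε ∧ 1 - p.1 + ε < p.2 ∧ p.2 < p.1 - ε}

lemma mem_preimage_V {ε : ℝ} (p : ℝ × ℝ) :
    p ∈ torusProj ⁻¹' Vset ε ↔ ‖(p.1 : AddCircle (1:ℝ))‖ ≤ ε ∨ ‖(p.2 : AddCircle (1:ℝ))‖ ≤ ε ∨
      ‖((p.1 + p.2 : ℝ) : AddCircle (1:ℝ))‖ ≤ ε ∨ ‖((p.1 - p.2 : ℝ) : AddCircle (1:ℝ))‖ ≤ ε := by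
  simp only [mem_preimage, Vset, mem_setOf_eq, torusProj, AddCircle.coe_add, AddCircle.coe_sub]

lemma six_facts_notMem {ε : ℝ} (hε : 0 < ε) {x y : ℝ}
    (hx1 : ε < x) (hx2 : x < 1 - ε) (hy1 : ε < y) (hy2 : y < 1 - ε)
    (hs : ε < |x + y - 1|) (hd : ε < |x - y|) :
    (x, y) ∉ torusProj ⁻¹' Vset ε := by
  intro hmem
  rw [mem_preimage_V] at hmem
  rcases hmem with h | h | h | h
  · exact not_near (all_int_1 hε hx1 hx2) h
  · exact not_near (all_int_1 hε hy1 hy2) h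
  · exact not_near (all_int_s hε (by linarith) (by linarith) (by simpa using hs)) h
  · exact not_near (all_int_d hε (by linarith) (by linarith) hd) h

lemma box_diff_eq {ε : ℝ} (hε : 0 < ε) (hε' : ε < 1 / 10) :
    (Ioc (0:ℝ) 1 ×ˢ Ioc (0:ℝ) 1) \ (torusProj ⁻¹' Vset ε)
      = Tb ε ∪ Tl ε ∪ Tt ε ∪ Tr ε := by
  ext ⟨x, y⟩
  simp only [mem_diff, mem_prod, mem_Ioc, Tb, Tl, Tt, Tr, mem_union, mem_setOf_eq]
  constructor
  · rintro ⟨⟨⟨hx0, hx1⟩, ⟨hy0, hy1⟩⟩, hP⟩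
    rw [mem_preimage_V] at hP
    push_neg at hP
    obtain ⟨h1', h2', h3', h4'⟩ := hP
    have h1 := not_le.2 h1'
    have h2 := not_le.2 h2'
    have h3 := not_le.2 h3'
    have h4 := not_le.2 h4'
    have hx := near h1 0
    have hx' := near h1 1
    have hy := near h2 0
    have hy' := near h2 1
    simp only [Int.cast_zero, Int.cast_one, sub_zero] at hx hx' hy hy'
    have hxl : ε < x := by
      rcases abs_cases x with ⟨h, _⟩ | ⟨h, _⟩ <;> [linarith [hx]; linarith [hx]]
    have hxr : x < 1 - ε := by
      rcases abs_cases (x - 1) with ⟨h, _⟩ | ⟨h, _⟩ <;> [linarith [hx']; linarith [hx']]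
    have hyl : ε < y := by
      rcases abs_cases y with ⟨h, _⟩ | ⟨h, _⟩ <;> [linarith [hy]; linarith [hy]]
    have hyr : y < 1 - ε := by
      rcases abs_cases (y - 1) with ⟨h, _⟩ | ⟨h, _⟩ <;> [linarith [hy']; linarith [hy']]
    have hs := near h3 1
    have hd := near h4 0
    simp only [Int.cast_zero, Int.cast_one, sub_zero] at hs hd
    rcases abs_cases (x + y - 1) with ⟨he, _⟩ | ⟨he, _⟩ <;>
      rcases abs_cases (x - y) with ⟨hf, _⟩ | ⟨hf, _⟩
    · -- x+y > 1+ε, x-y > ε : right triangle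
      exact Or.inr ⟨by linarith, by linarith, by linarith⟩
    · -- x+y > 1+ε, y-x > ε : top triangle
      exact Or.inl (Or.inr ⟨by linarith, by linarith, by linarith⟩)
    · -- x+y < 1-ε, x-y > ε : bottom
      exact Or.inl (Or.inl (Or.inl ⟨by linarith, by linarith, by linarith⟩))
    · -- x+y < 1-ε, y-x > ε : left
      exact Or.inl (Or.inl (Or.inr ⟨by linarith, by linarith, by linarith⟩))
  · rintro (((⟨h1, h2, h3⟩ | ⟨h1, h2, h3⟩) | ⟨h1, h2, h3⟩) | ⟨h1, h2, h3⟩)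
    · exact ⟨⟨⟨by linarith, by linarith⟩, ⟨by linarith, by linarith⟩⟩,
        six_facts_notMem hε (by linarith) (by linarith) h1 (by linarith)
          (by rw [abs_sub_comm]; calc ε < 1 - (x + y) := by linarith
                _ ≤ |1 - (x + y)| := le_abs_self _)
          (calc ε < x - y := by linarith
                _ ≤ |x - y| := le_abs_self _)⟩
    · exact ⟨⟨⟨by linarith, by linarith⟩, ⟨by linarith, by linarith⟩⟩,
        six_facts_notMem hε h1 (by linarith) (by linarith) (by linarith)
          (by rw [abs_sub_comm]; calc ε < 1 - (x + y) := by linarith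
                _ ≤ |1 - (x + y)| := le_abs_self _)
          (by rw [abs_sub_comm]; calc ε < y - x := by linarith
                _ ≤ |y - x| := le_abs_self _)⟩
    · have hy1 : 1 / 2 + ε < y := by linarith
      exact ⟨⟨⟨by linarith, by linarith⟩, ⟨by linarith, by linarith⟩⟩,
        six_facts_notMem hε (by linarith) (by linarith) (by linarith) h1
          (calc ε < x + y - 1 := by linarith
                _ ≤ |x + y - 1| := le_abs_self _)
          (by rw [abs_sub_comm]; calc ε < y - x := by linarith
                _ ≤ |y - x| := le_abs_self _)⟩
    · have hx1 : 1 / 2 + ε < x := by linarith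
      exact ⟨⟨⟨by linarith, by linarith⟩, ⟨by linarith, by linarith⟩⟩,
        six_facts_notMem hε (by linarith) h1 (by linarith) (by linarith)
          (calc ε < x + y - 1 := by linarith
                _ ≤ |x + y - 1| := le_abs_self _)
          (calc ε < x - y := by linarith
                _ ≤ |x - y| := le_abs_self _)⟩

lemma isOpen_Tb (ε : ℝ) : IsOpen (Tb ε) := by
  have : Tb ε = {p : ℝ × ℝ | ε < p.2} ∩ ({p | p.2 + ε < p.1} ∩ {p | p.1 < 1 - p.2 - ε}) := rfl
  rw [this]
  exact (isOpen_lt continuous_const continuous_snd).inter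
    ((isOpen_lt (continuous_snd.add continuous_const) continuous_fst).inter
      (isOpen_lt continuous_fst ((continuous_const.sub continuous_snd).sub continuous_const)))

lemma isOpen_Tl (ε : ℝ) : IsOpen (Tl ε) := by
  have : Tl ε = {p : ℝ × ℝ | ε < p.1} ∩ ({p | p.1 + ε < p.2} ∩ {p | p.2 < 1 - p.1 - ε}) := rfl
  rw [this]
  exact (isOpen_lt continuous_const continuous_fst).inter
    ((isOpen_lt (continuous_fst.add continuous_const) continuous_snd).inter
      (isOpen_lt continuous_snd ((continuous_const.sub continuous_fst).sub continuous_const)))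

lemma isOpen_Tt (ε : ℝ) : IsOpen (Tt ε) := by
  have : Tt ε = {p : ℝ × ℝ | p.2 < 1 - ε} ∩ ({p | 1 - p.2 + ε < p.1} ∩ {p | p.1 < p.2 - ε}) := rfl
  rw [this]
  exact (isOpen_lt continuous_snd continuous_const).inter
    ((isOpen_lt ((continuous_const.sub continuous_snd).add continuous_const) continuous_fst).inter
      (isOpen_lt continuous_fst (continuous_snd.sub continuous_const)))

lemma isOpen_Tr (ε : ℝ) : IsOpen (Tr ε) := by
  have : Tr ε = {p : ℝ × ℝ | p.1 < 1 - ε} ∩ ({p | 1 - p.1 + ε < p.2} ∩ {p | p.2 < p.1 - ε}) := rfl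
  rw [this]
  exact (isOpen_lt continuous_fst continuous_const).inter
    ((isOpen_lt ((continuous_const.sub continuous_fst).add continuous_const) continuous_snd).inter
      (isOpen_lt continuous_snd (continuous_fst.sub continuous_const)))

lemma integral_lin (a b c : ℝ) (hab : a ≤ b) :
    ∫ x in Ioo a b, (c - 2 * x) = c * (b - a) - (b ^ 2 - a ^ 2) := by
  rw [← integral_Ioc_eq_integral_Ioo, ← intervalIntegral.integral_of_le hab,
    intervalIntegral.integral_sub intervalIntegrable_const
      ((_root_.intervalIntegral.intervalIntegrable_id (μ := volume)).const_mul 2),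
    intervalIntegral.integral_const, intervalIntegral.integral_const_mul,
    integral_id]
  simp only [smul_eq_mul]
  ring

lemma integral_lin' (a b c : ℝ) (hab : a ≤ b) :
    ∫ x in Ioo a b, (2 * x - c) = (b ^ 2 - a ^ 2) - c * (b - a) := by
  rw [← integral_Ioc_eq_integral_Ioo, ← intervalIntegral.integral_of_le hab,
    intervalIntegral.integral_sub ((_root_.intervalIntegral.intervalIntegrable_id (μ := volume)).const_mul 2)
      intervalIntegrable_const,
    intervalIntegral.integral_const, intervalIntegral.integral_const_mul,
    integral_id]
  simp only [smul_eq_mul]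
  ring

lemma vol_Tl {ε : ℝ} (hε : 0 < ε) (hε' : ε < 1 / 10) :
    volume (Tl ε) = ENNReal.ofReal ((1 - 4 * ε) ^ 2 / 4) := by
  have hms : MeasurableSet (Tl ε) := (isOpen_Tl ε).measurableSet
  rw [show (volume : Measure (ℝ × ℝ)) = (volume : Measure ℝ).prod volume from Measure.volume_eq_prod ℝ ℝ,
    Measure.prod_apply hms]
  have hsec : ∀ x : ℝ, volume (Prod.mk x ⁻¹' Tl ε)
      = Set.indicator (Ioo ε (1/2 - ε)) (fun x => ENNReal.ofReal (1 - 2*ε - 2*x)) x := by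
    intro x
    have : Prod.mk x ⁻¹' Tl ε = if ε < x then Ioo (x + ε) (1 - x - ε) else ∅ := by
      split_ifs with hx
      · ext y; simp [Tl, hx, mem_Ioo]
      · ext y; simp only [Tl, mem_preimage, mem_setOf_eq, mem_empty_iff_false, iff_false]
        tauto
    rw [this]
    by_cases h1 : ε < x
    · rw [if_pos h1, Real.volume_Ioo]
      by_cases h2 : x < 1/2 - ε
      · rw [indicator_of_mem (show x ∈ Ioo ε (1/2 - ε) from ⟨h1, h2⟩)]
        congr 1
        ring
      · rw [indicator_of_notMem (fun hc => h2 hc.2), ENNReal.ofReal_eq_zero.2 (by linarith)]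
    · rw [if_neg h1, indicator_of_notMem (fun hc => h1 hc.1), measure_empty]
  rw [lintegral_congr hsec, lintegral_indicator measurableSet_Ioo _]
  have hab : ε ≤ 1/2 - ε := by linarith
  have hint : IntegrableOn (fun x => 1 - 2*ε - 2*x) (Ioo ε (1/2 - ε)) := by
    rw [← integrableOn_Icc_iff_integrableOn_Ioo]
    apply Continuous.integrableOn_Icc
    continuity
  have hnn : 0 ≤ᵐ[volume.restrict (Ioo ε (1/2 - ε))] fun x => 1 - 2*ε - 2*x := by
    filter_upwards [ae_restrict_mem measurableSet_Ioo] with x hx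
    have := hx.2
    simp only [Pi.zero_apply]
    linarith
  rw [← ofReal_integral_eq_lintegral_ofReal hint hnn]
  have : ∫ x in Ioo ε (1/2 - ε), (1 - 2*ε - 2*x) = (1 - 4*ε)^2/4 := by
    have h := integral_lin ε (1/2 - ε) (1 - 2*ε) hab
    rw [show (fun x => 1 - 2*ε - 2*x) = fun x => (1 - 2*ε) - 2*x from funext fun x => by ring] at *
    rw [h]
    ring
  rw [this]

lemma vol_Tr {ε : ℝ} (hε : 0 < ε) (hε' : ε < 1 / 10) :
    volume (Tr ε) = ENNReal.ofReal ((1 - 4 * ε) ^ 2 / 4) := by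
  have hms : MeasurableSet (Tr ε) := (isOpen_Tr ε).measurableSet
  rw [show (volume : Measure (ℝ × ℝ)) = (volume : Measure ℝ).prod volume from Measure.volume_eq_prod ℝ ℝ,
    Measure.prod_apply hms]
  have hsec : ∀ x : ℝ, volume (Prod.mk x ⁻¹' Tr ε)
      = Set.indicator (Ioo (1/2 + ε) (1 - ε)) (fun x => ENNReal.ofReal (2*x - 1 - 2*ε)) x := by
    intro x
    have : Prod.mk x ⁻¹' Tr ε = if x < 1 - ε then Ioo (1 - x + ε) (x - ε) else ∅ := by
      split_ifs with hx
      · ext y; simp [Tr, hx, mem_Ioo]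
      · ext y; simp only [Tr, mem_preimage, mem_setOf_eq, mem_empty_iff_false, iff_false]
        tauto
    rw [this]
    by_cases h1 : x < 1 - ε
    · rw [if_pos h1, Real.volume_Ioo]
      by_cases h2 : 1/2 + ε < x
      · rw [indicator_of_mem (show x ∈ Ioo (1/2 + ε) (1 - ε) from ⟨h2, h1⟩)]
        congr 1
        ring
      · rw [indicator_of_notMem (fun hc => h2 hc.1), ENNReal.ofReal_eq_zero.2 (by linarith)]
    · rw [if_neg h1, indicator_of_notMem (fun hc => h1 hc.2), measure_empty]
  rw [lintegral_congr hsec, lintegral_indicator measurableSet_Ioo _]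
  have hab : 1/2 + ε ≤ 1 - ε := by linarith
  have hint : IntegrableOn (fun x => 2*x - 1 - 2*ε) (Ioo (1/2 + ε) (1 - ε)) := by
    rw [← integrableOn_Icc_iff_integrableOn_Ioo]
    apply Continuous.integrableOn_Icc
    continuity
  have hnn : 0 ≤ᵐ[volume.restrict (Ioo (1/2 + ε) (1 - ε))] fun x => 2*x - 1 - 2*ε := by
    filter_upwards [ae_restrict_mem measurableSet_Ioo] with x hx
    have := hx.1
    simp only [Pi.zero_apply]
    linarith
  rw [← ofReal_integral_eq_lintegral_ofReal hint hnn]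
  have : ∫ x in Ioo (1/2 + ε) (1 - ε), (2*x - 1 - 2*ε) = (1 - 4*ε)^2/4 := by
    have h := integral_lin' (1/2 + ε) (1 - ε) (1 + 2*ε) hab
    rw [show (fun x => 2*x - 1 - 2*ε) = fun x => 2*x - (1 + 2*ε) from funext fun x => by ring] at *
    rw [h]
    ring
  rw [this]

lemma vol_Tb {ε : ℝ} (hε : 0 < ε) (hε' : ε < 1 / 10) :
    volume (Tb ε) = ENNReal.ofReal ((1 - 4 * ε) ^ 2 / 4) := by
  have hset : Tb ε = Prod.swap ⁻¹' Tl ε := by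
    ext ⟨x, y⟩
    simp only [Tb, Tl, mem_setOf_eq, mem_preimage, Prod.swap]
  rw [hset, show (volume : Measure (ℝ × ℝ)) = (volume : Measure ℝ).prod volume from
      Measure.volume_eq_prod ℝ ℝ,
    Measure.measurePreserving_swap.measure_preimage
      ((isOpen_Tl ε).measurableSet.nullMeasurableSet),
    ← Measure.volume_eq_prod ℝ ℝ]
  exact vol_Tl hε hε'

lemma vol_Tt {ε : ℝ} (hε : 0 < ε) (hε' : ε < 1 / 10) :
    volume (Tt ε) = ENNReal.ofReal ((1 - 4 * ε) ^ 2 / 4) := by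
  have hset : Tt ε = Prod.swap ⁻¹' Tr ε := by
    ext ⟨x, y⟩
    simp only [Tt, Tr, mem_setOf_eq, mem_preimage, Prod.swap]
  rw [hset, show (volume : Measure (ℝ × ℝ)) = (volume : Measure ℝ).prod volume from
      Measure.volume_eq_prod ℝ ℝ,
    Measure.measurePreserving_swap.measure_preimage
      ((isOpen_Tr ε).measurableSet.nullMeasurableSet),
    ← Measure.volume_eq_prod ℝ ℝ]
  exact vol_Tr hε hε'

lemma vol_four {ε : ℝ} (hε : 0 < ε) (hε' : ε < 1 / 10) :
    volume (Tb ε ∪ Tl ε ∪ Tt ε ∪ Tr ε) = ENNReal.ofReal ((1 - 4 * ε) ^ 2) := by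
  have hd1 : Disjoint (Tb ε) (Tl ε) := by
    rw [Set.disjoint_left]
    rintro ⟨x, y⟩ ⟨a1, a2, a3⟩ ⟨b1, b2, b3⟩
    simp only at *
    linarith
  have hd2 : Disjoint (Tb ε ∪ Tl ε) (Tt ε) := by
    rw [Set.disjoint_left]
    rintro ⟨x, y⟩ (⟨a1, a2, a3⟩ | ⟨a1, a2, a3⟩) ⟨b1, b2, b3⟩ <;> simp only at * <;> linarith
  have hd3 : Disjoint (Tb ε ∪ Tl ε ∪ Tt ε) (Tr ε) := by
    rw [Set.disjoint_left]
    rintro ⟨x, y⟩ ((⟨a1, a2, a3⟩ | ⟨a1, a2, a3⟩) | ⟨a1, a2, a3⟩) ⟨b1, b2, b3⟩ <;>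
      simp only at * <;> linarith
  rw [measure_union hd3 (isOpen_Tr ε).measurableSet,
    measure_union hd2 (isOpen_Tt ε).measurableSet,
    measure_union hd1 (isOpen_Tl ε).measurableSet,
    vol_Tb hε hε', vol_Tl hε hε', vol_Tt hε hε', vol_Tr hε hε']
  have hq : (0:ℝ) ≤ (1 - 4 * ε) ^ 2 / 4 := by positivity
  rw [← ENNReal.ofReal_add hq hq, ← ENNReal.ofReal_add (by linarith) hq,
    ← ENNReal.ofReal_add (by linarith) hq]
  congr 1
  ring

end VolCDAux

/-- The measure of `C_D` together with its images under `σ₁, σ₂` equals `8ε - 16ε²`. -/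
theorem volume_CD_union_images (ε : ℝ) (hε : 0 < ε) (hε' : ε < 1 / 10) :
    volume (CD ε ∪ sigma1 '' CD ε ∪ sigma2 '' CD ε)
      = ENNReal.ofReal (8 * ε - 16 * ε ^ 2) := by
  open VolCDAux in
  rw [VolCDAux.U_eq_V]
  have hVmeas : MeasurableSet (VolCDAux.Vset ε) := by
    have h1 : Continuous fun q : Torus => ‖q.1‖ := continuous_fst.norm
    have h2 : Continuous fun q : Torus => ‖q.2‖ := continuous_snd.norm
    have h3 : Continuous fun q : Torus => ‖q.1 + q.2‖ := (continuous_fst.add continuous_snd).norm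
    have h4 : Continuous fun q : Torus => ‖q.1 - q.2‖ := (continuous_fst.sub continuous_snd).norm
    have : VolCDAux.Vset ε = (fun q : Torus => ‖q.1‖) ⁻¹' Iic ε ∪
        ((fun q : Torus => ‖q.2‖) ⁻¹' Iic ε ∪
          ((fun q : Torus => ‖q.1 + q.2‖) ⁻¹' Iic ε ∪
            (fun q : Torus => ‖q.1 - q.2‖) ⁻¹' Iic ε)) := rfl
    rw [this]
    exact ((h1.measurable (measurableSet_Iic)).union
      ((h2.measurable measurableSet_Iic).union
        ((h3.measurable measurableSet_Iic).union (h4.measurable measurableSet_Iic))))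
  have h0 : MeasurePreserving ((↑) : ℝ → AddCircle (1:ℝ)) (volume.restrict (Ioc (0:ℝ) 1)) := by
    have := UnitAddCircle.measurePreserving_mk 0
    rwa [zero_add] at this
  have hmp : MeasurePreserving torusProj
      ((volume : Measure (ℝ × ℝ)).restrict (Ioc (0:ℝ) 1 ×ˢ Ioc (0:ℝ) 1))
      (volume : Measure Torus) := by
    have h3 : torusProj = Prod.map (fun x : ℝ => (x : AddCircle (1:ℝ)))
        (fun x : ℝ => (x : AddCircle (1:ℝ))) := rfl
    have h2 : (volume : Measure (ℝ × ℝ)).restrict (Ioc (0:ℝ) 1 ×ˢ Ioc (0:ℝ) 1)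
        = ((volume : Measure ℝ).restrict (Ioc (0:ℝ) 1)).prod
            ((volume : Measure ℝ).restrict (Ioc (0:ℝ) 1)) := by
      rw [Measure.prod_restrict, ← Measure.volume_eq_prod]
    rw [h3, h2, show (volume : Measure Torus) = _ from Measure.volume_eq_prod _ _]
    exact h0.prod h0
  rw [← hmp.measure_preimage hVmeas.nullMeasurableSet,
    Measure.restrict_apply (hmp.measurable hVmeas), inter_comm]
  have hbox : volume (Ioc (0:ℝ) 1 ×ˢ Ioc (0:ℝ) 1) = 1 := by
    rw [show (volume : Measure (ℝ × ℝ)) = (volume : Measure ℝ).prod volume from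
        Measure.volume_eq_prod ℝ ℝ, Measure.prod_prod, Real.volume_Ioc]
    norm_num
  have hkey := measure_inter_add_diff (μ := (volume : Measure (ℝ × ℝ)))
    (Ioc (0:ℝ) 1 ×ˢ Ioc (0:ℝ) 1) (hmp.measurable hVmeas)
  rw [hbox, VolCDAux.box_diff_eq hε hε', VolCDAux.vol_four hε hε'] at hkey
  have h1 : ENNReal.ofReal (8 * ε - 16 * ε ^ 2) + ENNReal.ofReal ((1 - 4 * ε) ^ 2) = 1 := by
    rw [← ENNReal.ofReal_add (by nlinarith) (by positivity), ← ENNReal.ofReal_one]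
    congr 1
    ring
  exact WithTop.add_right_cancel (ENNReal.ofReal_ne_top) (hkey.trans h1.symm)
end

section
/- For every ε with 0 < ε < 1/10, the translated set A = C_U + π(1/2, 1/2) in 𝕋² = ℝ²/ℤ², where C_U = π({(x,y) ∈ ℝ² : |x| ≤ ε or |y| ≤ ε}), satisfies m(A ∪ σ₁(A) ∪ σ₂(A) ∪ σ₁⁻¹(A) ∪ σ₂⁻¹(A)) < 2·m(A), where m is the Haar probability measure on 𝕋². -/
open MeasureTheory

open Metric Set

noncomputable instance : IsProbabilityMeasure (volume : Measure (AddCircle (1:ℝ))) :=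
  ⟨by simp [AddCircle.measure_univ]⟩

/-- The projection of a real interval of radius `ε < 1/2` is a closed ball in the circle. -/
lemma aux_coe_image_ball (c : ℝ) {ε : ℝ} (h1 : ε < 1/2) :
    ((↑) : ℝ → AddCircle (1:ℝ)) '' {x : ℝ | |x - c| ≤ ε}
      = closedBall ((c : AddCircle (1:ℝ))) ε := by
  ext q
  constructor
  · rintro ⟨x, hx, rfl⟩
    have hx' : |x - c| ≤ ε := hx
    have : dist ((x : AddCircle (1:ℝ))) ((c : AddCircle (1:ℝ))) = |x - c| := by
      rw [dist_eq_norm, ← QuotientAddGroup.mk_sub]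
      exact (AddCircle.norm_coe_eq_abs_iff 1 one_ne_zero).mpr (by rw [abs_one]; linarith)
    simpa [mem_closedBall, this] using hx'
  · intro hq
    obtain ⟨x, rfl⟩ := QuotientAddGroup.mk_surjective q
    have hnz : ((round (x - c) : ℝ) : AddCircle (1:ℝ)) = 0 := by
      rw [QuotientAddGroup.eq_zero_iff]; exact ⟨round (x-c), by simp⟩
    have hd : dist ((x : AddCircle (1:ℝ))) ((c : AddCircle (1:ℝ)))
        = |x - c - round (x - c)| := by
      rw [dist_eq_norm, ← QuotientAddGroup.mk_sub, AddCircle.norm_eq]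
      simp
    refine ⟨c + (x - c - round (x - c)), ?_, ?_⟩
    · simp only [mem_setOf_eq, add_sub_cancel_left]
      rw [← hd]; exact mem_closedBall.mp hq
    · have : (c + (x - c - (round (x - c) : ℝ))) = x - (round (x-c) : ℝ) := by ring
      rw [this, QuotientAddGroup.mk_sub, hnz, sub_zero]

/-- The translate `C_U + π(1/2, 1/2)` also expands badly under `σ₁, σ₂, σ₁⁻¹, σ₂⁻¹`. -/
theorem CU_translate_bad_expansion (ε : ℝ) (hε : 0 < ε) (hε' : ε < 1 / 10) :
    ∀ A : Set Torus, A = (fun u => u + torusProj (1 / 2, 1 / 2)) '' CU ε →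
      volume (A ∪ sigma1 '' A ∪ sigma2 '' A ∪ sigma1inv '' A ∪ sigma2inv '' A)
        < 2 * volume A := by
  intro A hA
  set hh : AddCircle (1:ℝ) := (((1/2 : ℝ)) : AddCircle (1:ℝ)) with hhdef
  set B : Set (AddCircle (1:ℝ)) := closedBall hh ε with hBdef
  set B₀ : Set (AddCircle (1:ℝ)) := closedBall (((0:ℝ) : AddCircle (1:ℝ))) ε with hB₀def
  set S1 : Set Torus := Prod.fst ⁻¹' B with hS1def
  set S2 : Set Torus := Prod.snd ⁻¹' B with hS2def
  set S3 : Set Torus := (fun p : Torus => p.1 + p.2) ⁻¹' B with hS3def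
  set S4 : Set Torus := (fun p : Torus => p.1 - p.2) ⁻¹' B with hS4def
  have hBm : MeasurableSet B := measurableSet_closedBall
  -- negation symmetry of B
  have hneg : -hh = hh := by
    rw [hhdef, ← QuotientAddGroup.mk_neg, QuotientAddGroup.eq_iff_sub_mem]
    exact ⟨-1, by norm_num⟩
  have hsym : ∀ q : AddCircle (1:ℝ), -q ∈ B ↔ q ∈ B := by
    intro q
    simp only [hBdef, mem_closedBall]
    rw [← hneg, dist_neg_neg, hneg]
  -- description of CU
  have hCU : CU ε = Prod.fst ⁻¹' (closedBall (((0:ℝ) : AddCircle (1:ℝ))) ε)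
      ∪ Prod.snd ⁻¹' (closedBall (((0:ℝ) : AddCircle (1:ℝ))) ε) := by
    have himg := aux_coe_image_ball 0 (ε := ε) (by linarith)
    simp only [sub_zero] at himg
    ext p
    constructor
    · rintro ⟨⟨x, y⟩, hxy, rfl⟩
      rcases hxy with h | h
      · exact Or.inl (himg ▸ ⟨x, h, rfl⟩)
      · exact Or.inr (himg ▸ ⟨y, h, rfl⟩)
    · obtain ⟨u, v⟩ := p
      rintro (h | h)
      · rw [mem_preimage, ← himg] at h
        obtain ⟨x, hx, hxe⟩ := h
        obtain ⟨y, rfl⟩ := QuotientAddGroup.mk_surjective v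
        exact ⟨(x, y), Or.inl hx, by simp [torusProj]; exact hxe⟩
      · rw [mem_preimage, ← himg] at h
        obtain ⟨y, hy, hye⟩ := h
        obtain ⟨x, rfl⟩ := QuotientAddGroup.mk_surjective u
        exact ⟨(x, y), Or.inr hy, by simp [torusProj]; exact hye⟩
  -- description of A
  have hA2 : A = S1 ∪ S2 := by
    have hc : torusProj (1 / 2, 1 / 2) = ((hh, hh) : Torus) := rfl
    have himg : (fun u : Torus => u + (hh, hh)) '' CU ε
        = (fun u : Torus => u - (hh, hh)) ⁻¹' CU ε :=
      congrFun (Set.image_eq_preimage_of_inverse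
        (fun p => by show p + (hh, hh) - (hh, hh) = p; simp)
        (fun p => by show p - (hh, hh) + (hh, hh) = p; simp)) (CU ε)
    have hshift : ∀ q : AddCircle (1:ℝ), q - hh ∈ closedBall (((0:ℝ) : AddCircle (1:ℝ))) ε
        ↔ q ∈ B := by
      intro q
      simp only [hBdef, mem_closedBall]
      have h0 : (((0:ℝ) : AddCircle (1:ℝ))) = 0 := by norm_num
      rw [h0, dist_zero_right, dist_eq_norm]
    rw [hA, hc, himg]
    ext p
    simp only [mem_preimage, hCU, mem_union, hS1def, hS2def]
    constructor
    · rintro (h | h)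
      · exact Or.inl ((hshift p.1).mp h)
      · exact Or.inr ((hshift p.2).mp h)
    · rintro (h | h)
      · exact Or.inl ((hshift p.1).mpr h)
      · exact Or.inr ((hshift p.2).mpr h)
  -- the alternative diagonal strip equals S4
  have hS5 : (fun p : Torus => p.2 - p.1) ⁻¹' B = S4 := by
    ext p
    have h' := hsym (p.1 - p.2)
    rw [neg_sub] at h'
    exact h'
  -- images of A
  have him1 : sigma1 '' A = S4 ∪ S2 := by
    rw [hA2, congrFun (Set.image_eq_preimage_of_inverse (g := sigma1inv)
      (fun p => by simp [sigma1, sigma1inv])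
      (fun p => by simp [sigma1, sigma1inv])) (S1 ∪ S2)]
    rfl
  have him2 : sigma2 '' A = S1 ∪ S4 := by
    rw [hA2, congrFun (Set.image_eq_preimage_of_inverse (g := sigma2inv)
      (fun p => by simp [sigma2, sigma2inv])
      (fun p => by simp [sigma2, sigma2inv])) (S1 ∪ S2)]
    have h2' : sigma2inv ⁻¹' S2 = S4 := by rw [← hS5]; rfl
    rw [Set.preimage_union, h2']
    rfl
  have him3 : sigma1inv '' A = S3 ∪ S2 := by
    rw [hA2, congrFun (Set.image_eq_preimage_of_inverse (g := sigma1)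
      (fun p => by simp [sigma1, sigma1inv])
      (fun p => by simp [sigma1, sigma1inv])) (S1 ∪ S2)]
    rfl
  have him4 : sigma2inv '' A = S1 ∪ S3 := by
    rw [hA2, congrFun (Set.image_eq_preimage_of_inverse (g := sigma2)
      (fun p => by simp [sigma2, sigma2inv])
      (fun p => by simp [sigma2, sigma2inv])) (S1 ∪ S2)]
    rfl
  -- the union is contained in a convenient set
  have hsub : A ∪ sigma1 '' A ∪ sigma2 '' A ∪ sigma1inv '' A ∪ sigma2inv '' A
      ⊆ (S1 ∪ S2) ∪ ((S3 \ S1) ∪ (S4 \ S1)) := by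
    rw [him1, him2, him3, him4, hA2]
    intro p hp
    by_cases h1 : p ∈ S1 <;>
      simp only [mem_union, mem_diff] at hp ⊢ <;> tauto
  -- measurability
  have hS1m : MeasurableSet S1 := measurable_fst hBm
  have hS2m : MeasurableSet S2 := measurable_snd hBm
  have hS3m : MeasurableSet S3 := (measurable_fst.add measurable_snd) hBm
  have hS4m : MeasurableSet S4 := (measurable_fst.sub measurable_snd) hBm
  -- volumes
  have hvB : volume B = ENNReal.ofReal (2*ε) := by
    rw [hBdef, AddCircle.volume_closedBall, min_eq_right (by linarith)]
  have hS1v : volume S1 = ENNReal.ofReal (2*ε) := by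
    rw [hS1def, ← Set.prod_univ, Measure.volume_eq_prod, Measure.prod_prod,
      measure_univ, mul_one, hvB]
  have hS2v : volume S2 = ENNReal.ofReal (2*ε) := by
    rw [hS2def, ← Set.univ_prod, Measure.volume_eq_prod, Measure.prod_prod,
      measure_univ, one_mul, hvB]
  have hslice4 : ∀ u : AddCircle (1:ℝ), (Prod.mk u ⁻¹' S4) = (fun v => v - u) ⁻¹' B := by
    intro u
    ext v
    have h' := hsym (v - u)
    rw [neg_sub] at h'
    exact h'
  have hsubright : ∀ u : AddCircle (1:ℝ), volume ((fun v => v - u) ⁻¹' B) = volume B := by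
    intro u
    simpa [sub_eq_add_neg] using measure_preimage_add_right volume (-u) B
  have hS3v : volume S3 = ENNReal.ofReal (2*ε) := by
    rw [Measure.volume_eq_prod, Measure.prod_apply hS3m]
    have : ∀ u : AddCircle (1:ℝ), volume (Prod.mk u ⁻¹' S3) = ENNReal.ofReal (2*ε) := by
      intro u
      have h : (Prod.mk u ⁻¹' S3) = (fun v => u + v) ⁻¹' B := rfl
      rw [h, measure_preimage_add, hvB]
    simp only [this]
    rw [lintegral_const, measure_univ, mul_one]
  have hS4v : volume S4 = ENNReal.ofReal (2*ε) := by
    rw [Measure.volume_eq_prod, Measure.prod_apply hS4m]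
    have : ∀ u : AddCircle (1:ℝ), volume (Prod.mk u ⁻¹' S4) = ENNReal.ofReal (2*ε) := by
      intro u
      rw [hslice4 u, hsubright u, hvB]
    simp only [this]
    rw [lintegral_const, measure_univ, mul_one]
  have hb2 : ENNReal.ofReal (2*ε) * ENNReal.ofReal (2*ε) = ENNReal.ofReal (4*ε^2) := by
    rw [← ENNReal.ofReal_mul (by linarith)]
    ring_nf
  have hS12v : volume (S1 ∩ S2) = ENNReal.ofReal (4*ε^2) := by
    rw [hS1def, hS2def, ← Set.prod_eq, Measure.volume_eq_prod, Measure.prod_prod, hvB, hb2]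
  have hS31v : volume (S3 ∩ S1) = ENNReal.ofReal (4*ε^2) := by
    rw [Measure.volume_eq_prod, Measure.prod_apply (hS3m.inter hS1m)]
    have : ∀ u : AddCircle (1:ℝ), volume (Prod.mk u ⁻¹' (S3 ∩ S1))
        = B.indicator (fun _ => ENNReal.ofReal (2*ε)) u := by
      intro u
      by_cases hu : u ∈ B
      · have h : Prod.mk u ⁻¹' (S3 ∩ S1) = (fun v => u + v) ⁻¹' B := by
          ext v
          exact ⟨fun hx => hx.1, fun hx => ⟨hx, hu⟩⟩
        rw [h, measure_preimage_add, hvB, Set.indicator_of_mem hu]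
      · have h : Prod.mk u ⁻¹' (S3 ∩ S1) = ∅ := by
          ext v
          simp only [mem_empty_iff_false, iff_false]
          exact fun hx => hu hx.2
        rw [h, measure_empty, Set.indicator_of_notMem hu]
    simp only [this]
    rw [lintegral_indicator hBm, setLIntegral_const, hvB, hb2]
  have hS41v : volume (S4 ∩ S1) = ENNReal.ofReal (4*ε^2) := by
    rw [Measure.volume_eq_prod, Measure.prod_apply (hS4m.inter hS1m)]
    have : ∀ u : AddCircle (1:ℝ), volume (Prod.mk u ⁻¹' (S4 ∩ S1))
        = B.indicator (fun _ => ENNReal.ofReal (2*ε)) u := by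
      intro u
      by_cases hu : u ∈ B
      · have h : Prod.mk u ⁻¹' (S4 ∩ S1) = (fun v => v - u) ⁻¹' B := by
          ext v
          have h' := hsym (v - u)
          rw [neg_sub] at h'
          exact ⟨fun hx => h'.mp hx.1, fun hx => ⟨h'.mpr hx, hu⟩⟩
        rw [h, hsubright u, hvB, Set.indicator_of_mem hu]
      · have h : Prod.mk u ⁻¹' (S4 ∩ S1) = ∅ := by
          ext v
          simp only [mem_empty_iff_false, iff_false]
          exact fun hx => hu hx.2
        rw [h, measure_empty, Set.indicator_of_notMem hu]
    simp only [this]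
    rw [lintegral_indicator hBm, setLIntegral_const, hvB, hb2]
  -- volume of A
  have hAv : volume A = ENNReal.ofReal (4*ε - 4*ε^2) := by
    have h1 : volume (S1 ∪ S2) + volume (S1 ∩ S2) = volume S1 + volume S2 :=
      measure_union_add_inter S1 hS2m
    rw [hS12v, hS1v, hS2v] at h1
    have h2 : ENNReal.ofReal (4*ε - 4*ε^2) + ENNReal.ofReal (4*ε^2)
        = ENNReal.ofReal (2*ε) + ENNReal.ofReal (2*ε) := by
      rw [← ENNReal.ofReal_add (by nlinarith) (by positivity),
        ← ENNReal.ofReal_add (by linarith) (by linarith)]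
      ring_nf
    rw [hA2]
    exact WithTop.add_right_cancel ENNReal.ofReal_ne_top (h1.trans h2.symm)
  -- volumes of the differences
  have hdiff3 : volume (S3 \ S1) = ENNReal.ofReal (2*ε - 4*ε^2) := by
    have h1 : volume (S3 \ S1) + volume (S3 ∩ S1) = volume S3 :=
      measure_diff_add_inter S3 hS1m
    rw [hS31v, hS3v] at h1
    have h2 : ENNReal.ofReal (2*ε - 4*ε^2) + ENNReal.ofReal (4*ε^2)
        = ENNReal.ofReal (2*ε) := by
      rw [← ENNReal.ofReal_add (by nlinarith) (by positivity)]
      ring_nf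
    exact WithTop.add_right_cancel ENNReal.ofReal_ne_top (h1.trans h2.symm)
  have hdiff4 : volume (S4 \ S1) = ENNReal.ofReal (2*ε - 4*ε^2) := by
    have h1 : volume (S4 \ S1) + volume (S4 ∩ S1) = volume S4 :=
      measure_diff_add_inter S4 hS1m
    rw [hS41v, hS4v] at h1
    have h2 : ENNReal.ofReal (2*ε - 4*ε^2) + ENNReal.ofReal (4*ε^2)
        = ENNReal.ofReal (2*ε) := by
      rw [← ENNReal.ofReal_add (by nlinarith) (by positivity)]
      ring_nf
    exact WithTop.add_right_cancel ENNReal.ofReal_ne_top (h1.trans h2.symm)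
  -- final computation
  calc volume (A ∪ sigma1 '' A ∪ sigma2 '' A ∪ sigma1inv '' A ∪ sigma2inv '' A)
      ≤ volume ((S1 ∪ S2) ∪ ((S3 \ S1) ∪ (S4 \ S1))) := measure_mono hsub
    _ ≤ volume (S1 ∪ S2) + (volume (S3 \ S1) + volume (S4 \ S1)) :=
        le_trans (measure_union_le _ _) (by gcongr; exact measure_union_le _ _)
    _ = ENNReal.ofReal (8*ε - 12*ε^2) := by
        rw [← hA2, hAv, hdiff3, hdiff4,
          ← ENNReal.ofReal_add (by nlinarith) (by nlinarith),
          ← ENNReal.ofReal_add (by nlinarith) (by nlinarith)]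
        ring_nf
    _ < ENNReal.ofReal (8*ε - 8*ε^2) := by
        rw [ENNReal.ofReal_lt_ofReal_iff (by nlinarith)]
        nlinarith
    _ = 2 * volume A := by
        rw [hAv, show (8*ε - 8*ε^2 : ℝ) = 2*(4*ε - 4*ε^2) by ring,
          ENNReal.ofReal_mul (by norm_num), ENNReal.ofReal_ofNat]
end

section
/- Let p be an odd prime and let S = {(x,0) : x ∈ ℤ/pℤ, x ≠ 0} ∪ {(0,y) : y ∈ ℤ/pℤ, y ≠ 0} ⊆ (ℤ/pℤ)². Then the cardinality of S ∪ σ₁(S) ∪ σ₂(S) ∪ σ₁⁻¹(S) ∪ σ₂⁻¹(S) equals 2·|S|, where σ₁ = [[1,1],[0,1]] and σ₂ = [[1,0],[1,1]] act on (ℤ/pℤ)² by matrix-vector multiplication (so the undirected vertex-isoperimetric bound holds with equality for S). -/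
/-- Action of `σ₁ = [[1,1],[0,1]]` on `(ℤ/pℤ)²`: `(x,y) ↦ (x+y, y)`. -/
def zsigma1 {p : ℕ} (v : ZMod p × ZMod p) : ZMod p × ZMod p := (v.1 + v.2, v.2)

/-- Action of `σ₂ = [[1,0],[1,1]]` on `(ℤ/pℤ)²`: `(x,y) ↦ (x, x+y)`. -/
def zsigma2 {p : ℕ} (v : ZMod p × ZMod p) : ZMod p × ZMod p := (v.1, v.1 + v.2)

/-- Action of `σ₁⁻¹ = [[1,-1],[0,1]]` on `(ℤ/pℤ)²`: `(x,y) ↦ (x-y, y)`. -/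
def zsigma1inv {p : ℕ} (v : ZMod p × ZMod p) : ZMod p × ZMod p := (v.1 - v.2, v.2)

/-- Action of `σ₂⁻¹ = [[1,0],[-1,1]]` on `(ℤ/pℤ)²`: `(x,y) ↦ (x, y-x)`. -/
def zsigma2inv {p : ℕ} (v : ZMod p × ZMod p) : ZMod p × ZMod p := (v.1, v.2 - v.1)

/-- For `S` the union of the two punctured coordinate axes in `(ℤ/pℤ)²`, the undirected
vertex-isoperimetric bound holds with equality: `|S ∪ σ₁(S) ∪ σ₂(S) ∪ σ₁⁻¹(S) ∪ σ₂⁻¹(S)| = 2|S|`. -/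
theorem undirected_isoperimetric_equality (p : ℕ) (hp : p.Prime) (hodd : Odd p)
    (S : Set (ZMod p × ZMod p))
    (hS : S = {v : ZMod p × ZMod p | (v.2 = 0 ∧ v.1 ≠ 0) ∨ (v.1 = 0 ∧ v.2 ≠ 0)}) :
    (S ∪ zsigma1 '' S ∪ zsigma2 '' S ∪ zsigma1inv '' S ∪ zsigma2inv '' S).ncard
      = 2 * S.ncard := by
  haveI : Fact p.Prime := ⟨hp⟩
  have htwo : (2 : ZMod p) ≠ 0 := by
    intro h
    have hd : (p : ℕ) ∣ 2 := by
      exact_mod_cast (ZMod.natCast_eq_zero_iff 2 p).mp (by exact_mod_cast h)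
    have h2 : p = 2 := (Nat.prime_dvd_prime_iff_eq hp Nat.prime_two).mp hd
    rw [h2] at hodd
    exact (Nat.not_odd_iff_even.mpr (by norm_num)) hodd
  classical
  set A1 : Set (ZMod p × ZMod p) := {v | v.2 = 0 ∧ v.1 ≠ 0} with hA1
  set A2 : Set (ZMod p × ZMod p) := {v | v.1 = 0 ∧ v.2 ≠ 0} with hA2
  set D : Set (ZMod p × ZMod p) := {v | v.1 = v.2 ∧ v.2 ≠ 0} with hD
  set E : Set (ZMod p × ZMod p) := {v | v.1 = -v.2 ∧ v.2 ≠ 0} with hE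
  have hSu : S = A1 ∪ A2 := by
    rw [hS]; ext v; simp [hA1, hA2, Set.mem_union, Set.mem_setOf_eq]
  have h1a : zsigma1 '' A1 = A1 := by
    ext ⟨x, y⟩
    simp only [hA1, Set.mem_image, Set.mem_setOf_eq, zsigma1, Prod.mk.injEq, Prod.exists]
    constructor
    · rintro ⟨a, b, ⟨hb, ha⟩, rfl, rfl⟩; simp_all
    · rintro ⟨hy, hx⟩; exact ⟨x, y, ⟨hy, hx⟩, by simp [hy], rfl⟩
  have h1b : zsigma1 '' A2 = D := by
    ext ⟨x, y⟩
    simp only [hA2, hD, Set.mem_image, Set.mem_setOf_eq, zsigma1, Prod.mk.injEq, Prod.exists]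
    constructor
    · rintro ⟨a, b, ⟨ha, hb⟩, rfl, rfl⟩; simp_all
    · rintro ⟨hxy, hy⟩; exact ⟨0, y, ⟨rfl, hy⟩, by simpa using hxy.symm, rfl⟩
  have h2a : zsigma2 '' A1 = D := by
    ext ⟨x, y⟩
    simp only [hA1, hD, Set.mem_image, Set.mem_setOf_eq, zsigma2, Prod.mk.injEq, Prod.exists]
    constructor
    · rintro ⟨a, b, ⟨hb, ha⟩, rfl, rfl⟩; simp_all
    · rintro ⟨hxy, hy⟩; exact ⟨x, 0, ⟨rfl, hxy ▸ hy⟩, rfl, by simpa using hxy⟩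
  have h2b : zsigma2 '' A2 = A2 := by
    ext ⟨x, y⟩
    simp only [hA2, Set.mem_image, Set.mem_setOf_eq, zsigma2, Prod.mk.injEq, Prod.exists]
    constructor
    · rintro ⟨a, b, ⟨ha, hb⟩, rfl, rfl⟩; simp_all
    · rintro ⟨hx, hy⟩; exact ⟨x, y, ⟨hx, hy⟩, rfl, by simp [hx]⟩
  have h3a : zsigma1inv '' A1 = A1 := by
    ext ⟨x, y⟩
    simp only [hA1, Set.mem_image, Set.mem_setOf_eq, zsigma1inv, Prod.mk.injEq, Prod.exists]
    constructor
    · rintro ⟨a, b, ⟨hb, ha⟩, rfl, rfl⟩; simp_all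
    · rintro ⟨hy, hx⟩; exact ⟨x, y, ⟨hy, hx⟩, by simp [hy], rfl⟩
  have h3b : zsigma1inv '' A2 = E := by
    ext ⟨x, y⟩
    simp only [hA2, hE, Set.mem_image, Set.mem_setOf_eq, zsigma1inv, Prod.mk.injEq, Prod.exists]
    constructor
    · rintro ⟨a, b, ⟨ha, hb⟩, rfl, rfl⟩; simp_all
    · rintro ⟨hxy, hy⟩; exact ⟨0, y, ⟨rfl, hy⟩, by simpa using hxy.symm, rfl⟩
  have h4a : zsigma2inv '' A1 = E := by
    ext ⟨x, y⟩
    simp only [hA1, hE, Set.mem_image, Set.mem_setOf_eq, zsigma2inv, Prod.mk.injEq, Prod.exists]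
    constructor
    · rintro ⟨a, b, ⟨hb, ha⟩, rfl, rfl⟩; simp_all
    · rintro ⟨hxy, hy⟩
      refine ⟨x, 0, ⟨rfl, by rw [hxy]; exact neg_ne_zero.mpr hy⟩, rfl, ?_⟩
      rw [hxy]; ring
  have h4b : zsigma2inv '' A2 = A2 := by
    ext ⟨x, y⟩
    simp only [hA2, Set.mem_image, Set.mem_setOf_eq, zsigma2inv, Prod.mk.injEq, Prod.exists]
    constructor
    · rintro ⟨a, b, ⟨ha, hb⟩, rfl, rfl⟩; simp_all
    · rintro ⟨hx, hy⟩; exact ⟨x, y, ⟨hx, hy⟩, rfl, by simp [hx]⟩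
  have hU : S ∪ zsigma1 '' S ∪ zsigma2 '' S ∪ zsigma1inv '' S ∪ zsigma2inv '' S
      = A1 ∪ A2 ∪ D ∪ E := by
    rw [hSu, Set.image_union, Set.image_union, Set.image_union, Set.image_union,
      h1a, h1b, h2a, h2b, h3a, h3b, h4a, h4b]
    ext v; simp only [Set.mem_union]; tauto
  -- injectivity
  have hinj2 : Function.Injective (zsigma2 (p := p)) := by
    rintro ⟨a, b⟩ ⟨c, d⟩ h
    simp only [zsigma2, Prod.mk.injEq] at h
    obtain ⟨h1, h2⟩ := h
    subst h1
    exact Prod.ext rfl (add_left_cancel h2)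
  have hinj2i : Function.Injective (zsigma2inv (p := p)) := by
    rintro ⟨a, b⟩ ⟨c, d⟩ h
    simp only [zsigma2inv, Prod.mk.injEq] at h
    obtain ⟨h1, h2⟩ := h
    subst h1
    exact Prod.ext rfl (by linear_combination h2)
  have hDcard : D.ncard = A1.ncard := by
    rw [← h2a, Set.ncard_image_of_injective _ hinj2]
  have hEcard : E.ncard = A1.ncard := by
    rw [← h4a, Set.ncard_image_of_injective _ hinj2i]
  have hA2card : A2.ncard = A1.ncard := by
    have hsw : Prod.swap '' A1 = A2 := by
      ext ⟨x, y⟩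
      simp only [hA1, hA2, Set.mem_image, Set.mem_setOf_eq, Prod.exists, Prod.swap_prod_mk,
        Prod.mk.injEq]
      constructor
      · rintro ⟨a, b, ⟨hb, ha⟩, rfl, rfl⟩; exact ⟨hb, ha⟩
      · rintro ⟨hx, hy⟩; exact ⟨y, x, ⟨hx, hy⟩, rfl, rfl⟩
    rw [← hsw, Set.ncard_image_of_injective _ Prod.swap_injective]
  -- disjointness
  have hd12 : Disjoint A1 A2 := by
    rw [Set.disjoint_left]; rintro v ⟨h1, h2⟩ ⟨h3, h4⟩; exact h2 h3
  have hdD : Disjoint (A1 ∪ A2) D := by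
    rw [Set.disjoint_left]
    rintro v (⟨h1, h2⟩ | ⟨h1, h2⟩) ⟨h3, h4⟩
    · exact h4 h1
    · exact h4 (h3 ▸ h1)
  have hdE : Disjoint (A1 ∪ A2 ∪ D) E := by
    rw [Set.disjoint_left]
    rintro v ((⟨h1, h2⟩ | ⟨h1, h2⟩) | ⟨h1, h2⟩) ⟨h3, h4⟩
    · exact h4 h1
    · exact h4 (by rw [← neg_eq_zero, ← h3, h1])
    · apply h4
      have : (2 : ZMod p) * v.2 = 0 := by linear_combination h3 - h1
      rcases mul_eq_zero.mp this with h | h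
      · exact absurd h htwo
      · exact h
  rw [hU, hSu,
    Set.ncard_union_eq hdE (Set.toFinite _) (Set.toFinite _),
    Set.ncard_union_eq hdD (Set.toFinite _) (Set.toFinite _),
    Set.ncard_union_eq hd12 (Set.toFinite _) (Set.toFinite _),
    hDcard, hEcard, hA2card]
  ring
end

section
/- Let p be an odd prime and let S = {(x,0) : x ∈ ℤ/pℤ, x ≠ 0} ∪ {(0,y) : y ∈ ℤ/pℤ, y ≠ 0} ∪ {(x,−x) : x ∈ ℤ/pℤ, x ≠ 0} ⊆ (ℤ/pℤ)². Then the cardinality of S ∪ σ₁(S) ∪ σ₂(S) equals (4/3)·|S| (i.e. 3·|S ∪ σ₁(S) ∪ σ₂(S)| = 4·|S|), where σ₁ = [[1,1],[0,1]] and σ₂ = [[1,0],[1,1]] act on (ℤ/pℤ)² by matrix-vector multiplication (so the directed vertex-isoperimetric bound holds with equality for S). -/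
lemma line_ncard {p : ℕ} [NeZero p] (f : ZMod p → ZMod p × ZMod p) (hf : Function.Injective f) :
    (f '' {x : ZMod p | x ≠ 0}).ncard = p - 1 := by
  rw [Set.ncard_image_of_injective _ hf]
  have h : ({x : ZMod p | x ≠ 0}) = Set.univ \ {0} := by ext x; simp
  rw [h, Set.ncard_diff (by simp), Set.ncard_univ, Set.ncard_singleton, Nat.card_eq_fintype_card,
    ZMod.card]

/-- For `S` the union of the two punctured coordinate axes and the punctured anti-diagonal in
`(ℤ/pℤ)²`, the directed vertex-isoperimetric bound holds with equality:
`3·|S ∪ σ₁(S) ∪ σ₂(S)| = 4·|S|`. -/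
theorem directed_isoperimetric_equality (p : ℕ) (hp : p.Prime) (hodd : Odd p)
    (S : Set (ZMod p × ZMod p))
    (hS : S = {v : ZMod p × ZMod p | (v.2 = 0 ∧ v.1 ≠ 0) ∨ (v.1 = 0 ∧ v.2 ≠ 0) ∨
      (v.2 = -v.1 ∧ v.1 ≠ 0)}) :
    3 * (S ∪ zsigma1 '' S ∪ zsigma2 '' S).ncard = 4 * S.ncard := by
  haveI : Fact p.Prime := ⟨hp⟩
  haveI : NeZero p := ⟨hp.ne_zero⟩
  have hp2 : (2 : ZMod p) ≠ 0 := by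
    intro h
    have h2 : p ∣ 2 := (ZMod.natCast_eq_zero_iff 2 p).mp (by exact_mod_cast h)
    have := Nat.le_of_dvd two_pos h2
    have h3 := hp.two_le
    have : p = 2 := by omega
    rw [this] at hodd
    exact (by norm_num : ¬ Odd 2) hodd
  set A : Set (ZMod p × ZMod p) := {v | v.2 = 0 ∧ v.1 ≠ 0} with hA
  set B : Set (ZMod p × ZMod p) := {v | v.1 = 0 ∧ v.2 ≠ 0} with hB
  set C : Set (ZMod p × ZMod p) := {v | v.2 = -v.1 ∧ v.1 ≠ 0} with hC
  set D : Set (ZMod p × ZMod p) := {v | v.2 = v.1 ∧ v.1 ≠ 0} with hD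
  have hSplit : S = A ∪ B ∪ C := by
    rw [hS]; ext v; simp [hA, hB, hC, Set.mem_union]; tauto
  -- the union
  have hU : S ∪ zsigma1 '' S ∪ zsigma2 '' S = A ∪ B ∪ C ∪ D := by
    ext ⟨x, y⟩
    simp only [Set.mem_union, Set.mem_image, hS, hA, hB, hC, hD, Set.mem_setOf_eq, Prod.exists,
      zsigma1, zsigma2, Prod.mk.injEq]
    constructor
    · rintro ((h | h) | h)
      · tauto
      · obtain ⟨a, b, hab, hx, hy⟩ := h
        subst hy; subst hx
        rcases hab with ⟨h1, h2⟩ | ⟨h1, h2⟩ | ⟨h1, h2⟩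
        · subst h1; simp; tauto
        · subst h1; simp at *; tauto
        · subst h1; simp; tauto
      · obtain ⟨a, b, hab, hx, hy⟩ := h
        subst hy; subst hx
        rcases hab with ⟨h1, h2⟩ | ⟨h1, h2⟩ | ⟨h1, h2⟩
        · subst h1; simp; tauto
        · subst h1; simp; tauto
        · subst h1; simp; tauto
    · rintro (((h | h) | h) | h)
      · tauto
      · tauto
      · tauto
      · -- diagonal: (x,x) = zsigma1 (0,x)
        obtain ⟨h1, h2⟩ := h
        subst h1
        exact Or.inl (Or.inr ⟨0, y, Or.inr (Or.inl ⟨rfl, h2⟩), by simp, rfl⟩)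
  have cardA : A.ncard = p - 1 := by
    have : A = (fun x : ZMod p => (x, (0:ZMod p))) '' {x | x ≠ 0} := by
      ext ⟨a, b⟩; simp [hA, Prod.ext_iff]; aesop
    rw [this]; exact line_ncard _ (fun a b h => by simpa [Prod.ext_iff] using h)
  have cardB : B.ncard = p - 1 := by
    have : B = (fun x : ZMod p => ((0:ZMod p), x)) '' {x | x ≠ 0} := by
      ext ⟨a, b⟩; simp [hB, Prod.ext_iff]; aesop
    rw [this]; exact line_ncard _ (fun a b h => by simpa [Prod.ext_iff] using h)
  have cardC : C.ncard = p - 1 := by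
    have : C = (fun x : ZMod p => (x, -x)) '' {x | x ≠ 0} := by
      ext ⟨a, b⟩; simp [hC, Prod.ext_iff]; aesop
    rw [this]; exact line_ncard _ (fun a b h => by simpa [Prod.ext_iff] using h)
  have cardD : D.ncard = p - 1 := by
    have : D = (fun x : ZMod p => (x, x)) '' {x | x ≠ 0} := by
      ext ⟨a, b⟩; simp [hD, Prod.ext_iff]; aesop
    rw [this]; exact line_ncard _ (fun a b h => by simpa [Prod.ext_iff] using h)
  have dAB : Disjoint A B := by
    rw [Set.disjoint_left]; rintro ⟨x, y⟩ ⟨h1, h2⟩ ⟨h3, _⟩; exact h2 h3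
  have dAC : Disjoint A C := by
    rw [Set.disjoint_left]; rintro ⟨x, y⟩ ⟨h1, h2⟩ ⟨h3, h4⟩
    have : -x = 0 := by rw [← h3, h1]
    exact h4 (neg_eq_zero.mp this)
  have dBC : Disjoint B C := by
    rw [Set.disjoint_left]; rintro ⟨x, y⟩ ⟨h1, h2⟩ ⟨h3, h4⟩; exact h4 h1
  have dABC_D : Disjoint (A ∪ B ∪ C) D := by
    rw [Set.disjoint_left]
    rintro ⟨x, y⟩ ((⟨h1, h2⟩ | ⟨h1, h2⟩) | ⟨h1, h2⟩) ⟨h3, h4⟩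
    · exact h4 (h1 ▸ h3).symm
    · exact h4 h1
    · have hx : x = -x := h3.symm.trans h1
      have h2x : (2 : ZMod p) * x = 0 := by
        have := eq_neg_iff_add_eq_zero.mp hx
        rw [two_mul]; exact this
      rcases mul_eq_zero.mp h2x with h | h
      · exact hp2 h
      · exact h2 h
  have hABC : (A ∪ B ∪ C).ncard = 3 * (p - 1) := by
    rw [Set.ncard_union_eq (Disjoint.union_left dAC dBC) (Set.toFinite _) (Set.toFinite _),
      Set.ncard_union_eq dAB (Set.toFinite _) (Set.toFinite _), cardA, cardB, cardC]
    ring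
  have hABCD : (A ∪ B ∪ C ∪ D).ncard = 4 * (p - 1) := by
    rw [Set.ncard_union_eq dABC_D (Set.toFinite _) (Set.toFinite _), hABC, cardD]
    ring
  rw [hU, hABCD, hSplit, hABC]
  ring
end
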